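/- arXiv:2404.03530 — 4 statements merged into one kernel-verified Lean document; each statement's English description precedes it below -/
import Mathlib

section
/- Let R = K[x_1,...,x_n] be a polynomial ring over a field K, I a homogeneous ideal of R, and ≺ a graded monomial ordering. If R/I is Artinian with degree of regularity d_reg(I) = min{d : R_d = I_d}, then every element of the reduced Gröbner basis of I with respect to ≺ has degree at most d_reg(I). -/
open MvPolynomial

namespace GBPaper

/-- The dimension of the degree-`d` homogeneous piece of `R/I`,
where `R = K[x_i : i ∈ σ]`. -/
noncomputable def hilbertFn (K : Type*) [Field K] {σ : Type*}
    (I : Ideal (MvPolynomial σ K)) (d : ℕ) : ℕ :=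
  Module.finrank K
    ((MvPolynomial.homogeneousSubmodule σ K d).map
      (Ideal.Quotient.mkₐ K I).toLinearMap)

/-- An ideal is homogeneous iff it contains all homogeneous components of its elements. -/
def IsHomogeneousIdeal {K : Type*} [Field K] {σ : Type*}
    (I : Ideal (MvPolynomial σ K)) : Prop :=
  ∀ f ∈ I, ∀ d : ℕ, MvPolynomial.homogeneousComponent d f ∈ I

/-- The degree of regularity: the least `d` with `R_d = I_d`. -/
noncomputable def degReg (K : Type*) [Field K] {σ : Type*}
    (I : Ideal (MvPolynomial σ K)) : ℕ :=
  sInf {d : ℕ | ∀ f : MvPolynomial σ K, f.IsHomogeneous d → f ∈ I}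

/-- The generalized degree of regularity: the least `d₀` from which on the Hilbert
function of `R/I` is constant. -/
noncomputable def gdegReg (K : Type*) [Field K] {σ : Type*}
    (I : Ideal (MvPolynomial σ K)) : ℕ :=
  sInf {d₀ : ℕ | ∀ d : ℕ, d₀ ≤ d → hilbertFn K I d = hilbertFn K I d₀}

/-- The leading monomial (leading exponent) of a polynomial with respect to a
monomial order. -/
noncomputable def lm {K : Type*} [Field K] {σ : Type*} (m : MonomialOrder σ)
    (f : MvPolynomial σ K) : σ →₀ ℕ :=
  m.toSyn.symm (f.support.sup fun s => m.toSyn s)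

/-- A monomial order is graded (degree-compatible) if it refines total degree. -/
def MonIsGraded {σ : Type*} (m : MonomialOrder σ) : Prop :=
  ∀ a b : σ →₀ ℕ, a.degree < b.degree → m.toSyn a < m.toSyn b

/-- `G` is the reduced Gröbner basis of `I` with respect to the monomial order `m`. -/
structure IsReducedGB {K : Type*} [Field K] {σ : Type*} (m : MonomialOrder σ)
    (I : Ideal (MvPolynomial σ K)) (G : Finset (MvPolynomial σ K)) : Prop where
  subset : (G : Set (MvPolynomial σ K)) ⊆ I
  zero_not_mem : (0 : MvPolynomial σ K) ∉ G
  monic : ∀ g ∈ G, MvPolynomial.coeff (lm m g) g = 1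
  isGB : ∀ f ∈ I, f ≠ 0 → ∃ g ∈ G, lm m g ≤ lm m f
  reduced : ∀ g ∈ G, ∀ g' ∈ G, g ≠ g' → ∀ s ∈ g.support, ¬ lm m g' ≤ s

/-- The degree reverse lexicographic order with `x_0 ≻ x_1 ≻ ⋯`. -/
def IsDegRevLex {n : ℕ} (m : MonomialOrder (Fin n)) : Prop :=
  ∀ a b : Fin n →₀ ℕ, m.toSyn a < m.toSyn b ↔
    (a.degree < b.degree ∨
      (a.degree = b.degree ∧ ∃ i, b i < a i ∧ ∀ j, i < j → a j = b j))

/-- Restriction of an exponent vector on `n+1` variables to the first `n` variables. -/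
noncomputable def restr {n : ℕ} (a : Fin (n + 1) →₀ ℕ) : Fin n →₀ ℕ :=
  Finsupp.equivFunOnFinite.symm fun i => a i.castSucc

/-- Extension of an exponent vector on `n` variables to `n+1` variables (with
`y`-exponent `0`). -/
noncomputable def extX {n : ℕ} (a : Fin n →₀ ℕ) : Fin (n + 1) →₀ ℕ :=
  Finsupp.embDomain Fin.castSuccEmb a

/-- `m'` is the homogenization (w.r.t. the last variable `y`) of the graded
monomial order `m₀`: it compares first total degrees, then the `X`-parts using `m₀`. -/
def IsHomogenizationOrder {n : ℕ} (m' : MonomialOrder (Fin (n + 1)))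
    (m₀ : MonomialOrder (Fin n)) : Prop :=
  ∀ a b : Fin (n + 1) →₀ ℕ, m'.toSyn a < m'.toSyn b ↔
    (a.degree < b.degree ∨
      (a.degree = b.degree ∧ m₀.toSyn (restr a) < m₀.toSyn (restr b)))

/-- The top part (maximal total degree part) of a polynomial. -/
noncomputable def topPart {K : Type*} [Field K] {σ : Type*}
    (f : MvPolynomial σ K) : MvPolynomial σ K :=
  MvPolynomial.homogeneousComponent f.totalDegree f

/-- The homogenization of `f ∈ K[x_1,…,x_n]` by the extra (last) variable `y`. -/
noncomputable def homog {K : Type*} [Field K] {n : ℕ}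
    (f : MvPolynomial (Fin n) K) : MvPolynomial (Fin (n + 1)) K :=
  ∑ s ∈ f.support,
    MvPolynomial.monomial
      (extX s + Finsupp.single (Fin.last n) (f.totalDegree - s.degree))
      (f.coeff s)

/-- The last variable `y` used for homogenization. -/
noncomputable def yvar (K : Type*) [Field K] (n : ℕ) : MvPolynomial (Fin (n + 1)) K :=
  MvPolynomial.X (Fin.last n)

/-- Substituting `y = 0`, the "top part" of a homogeneous polynomial in `R[y]`. -/
noncomputable def setYZero {K : Type*} [Field K] {n : ℕ}
    (g : MvPolynomial (Fin (n + 1)) K) : MvPolynomial (Fin (n + 1)) K :=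
  MvPolynomial.aeval
    (fun i => if i = Fin.last n then 0 else MvPolynomial.X i) g

/-- The ideal generated by the polynomials `f j` for `j < i`. -/
noncomputable def prevIdeal {K : Type*} [Field K] {σ : Type*} {M : ℕ}
    (f : Fin M → MvPolynomial σ K) (i : Fin M) : Ideal (MvPolynomial σ K) :=
  Ideal.span (f '' {j | j < i})

/-- `d`-regularity of a sequence of homogeneous polynomials of degrees `dg`. -/
def IsDRegularSeq {K : Type*} [Field K] {σ : Type*} {M : ℕ}
    (f : Fin M → MvPolynomial σ K) (dg : Fin M → ℕ) (d : ℕ) : Prop :=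
  ∀ i : Fin M, ∀ g : MvPolynomial σ K, ∀ e : ℕ,
    g.IsHomogeneous e → e + dg i < d →
    g * f i ∈ prevIdeal f i → g ∈ prevIdeal f i

/-- Semi-regularity (Pardue): each multiplication map on graded pieces of the
successive quotients is injective or surjective. -/
def IsSemiRegularSeq {K : Type*} [Field K] {σ : Type*} {M : ℕ}
    (f : Fin M → MvPolynomial σ K) (dg : Fin M → ℕ) : Prop :=
  ∀ i : Fin M, ∀ t : ℕ, dg i ≤ t →
    (∀ g : MvPolynomial σ K, g.IsHomogeneous (t - dg i) →
        g * f i ∈ prevIdeal f i → g ∈ prevIdeal f i) ∨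
    (∀ h : MvPolynomial σ K, h.IsHomogeneous t →
        ∃ g : MvPolynomial σ K, g.IsHomogeneous (t - dg i) ∧
          h - g * f i ∈ prevIdeal f i)

/-- The power series `∏ (1 - z^{d_i}) / (1-z)^n` over `ℤ`. -/
noncomputable def semiRegSeries (n : ℕ) {M : ℕ} (dg : Fin M → ℕ) : PowerSeries ℤ :=
  (∏ i : Fin M, (1 - (PowerSeries.X : PowerSeries ℤ) ^ dg i)) *
    ((PowerSeries.invOneSubPow ℤ n : (PowerSeries ℤ)ˣ) : PowerSeries ℤ)

/-- The cutoff of the truncation `[·]`: the first index with a nonpositive coefficient. -/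
noncomputable def truncCutoff (P : PowerSeries ℤ) : ℕ :=
  sInf {t : ℕ | PowerSeries.coeff t P ≤ 0}

/-- The coefficient of `z^t` in the series `[P]` obtained by truncating `P` after
the last consecutive positive coefficient. -/
noncomputable def truncCoeff (P : PowerSeries ℤ) (t : ℕ) : ℤ :=
  if t < truncCutoff P then PowerSeries.coeff t P else 0

section Koszul

variable {K : Type*} [Field K] {σ : Type*} {M : ℕ}

/-- Index set of the degree-`i` part of the Koszul complex on `M` polynomials. -/
abbrev KIdx (M i : ℕ) := {s : Finset (Fin M) // s.card = i}

/-- The Koszul differential `K_{i+1} → K_i` of the Koszul complex on `f`. -/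
noncomputable def koszulD (f : Fin M → MvPolynomial σ K) (i : ℕ)
    (v : KIdx M (i + 1) → MvPolynomial σ K) :
    KIdx M i → MvPolynomial σ K :=
  fun t => ∑ j : Fin M,
    if h : j ∈ t.val then 0
    else ((-1 : MvPolynomial σ K) ^ (t.val.filter (fun l => l < j)).card) * f j *
      v ⟨insert j t.val, by rw [Finset.card_insert_of_notMem h, t.prop]⟩

/-- A Koszul `i`-chain is homogeneous of (internal) degree `d`: each component at a
subset `s` is homogeneous of degree `d - ∑_{j ∈ s} dg j` (and zero if `d` is smaller
than this shift). -/
def KChainHom (dg : Fin M → ℕ) (i : ℕ)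
    (v : KIdx M i → MvPolynomial σ K) (d : ℕ) : Prop :=
  ∀ t : KIdx M i,
    (v t).IsHomogeneous (d - ∑ j ∈ t.val, dg j) ∧
    (d < ∑ j ∈ t.val, dg j → v t = 0)

/-- A Koszul `i`-cycle: an `i`-chain killed by the Koszul differential
(every `0`-chain is a cycle). -/
def IsKCycle (f : Fin M → MvPolynomial σ K) :
    (i : ℕ) → (KIdx M i → MvPolynomial σ K) → Prop
  | 0, _ => True
  | (i + 1), v => koszulD f i v = 0

/-- The degree-`d` part of the `i`-th Koszul homology of `f` vanishes:
every homogeneous cycle of degree `d` is a boundary. -/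
def KoszulHVanish (f : Fin M → MvPolynomial σ K) (dg : Fin M → ℕ)
    (i d : ℕ) : Prop :=
  ∀ v : KIdx M i → MvPolynomial σ K, KChainHom dg i v d → IsKCycle f i v →
    ∃ w : KIdx M (i + 1) → MvPolynomial σ K, koszulD f i w = v

/-- The sum `∑ v_j f_j` of which syzygies are the kernel. -/
noncomputable def syzSum (f v : Fin M → MvPolynomial σ K) : MvPolynomial σ K :=
  ∑ j : Fin M, v j * f j

/-- The module of trivial (Koszul) syzygies of `f`. -/
noncomputable def trivSyz (f : Fin M → MvPolynomial σ K) :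
    Submodule (MvPolynomial σ K) (Fin M → MvPolynomial σ K) :=
  Submodule.span (MvPolynomial σ K)
    {w | ∃ i j : Fin M, i < j ∧ w = Pi.single j (f i) - Pi.single i (f j)}

/-- A tuple `v` is homogeneous of degree `e` as an element of `⊕ R(-dg j)`. -/
def TupleHom (dg : Fin M → ℕ) (v : Fin M → MvPolynomial σ K) (e : ℕ) : Prop :=
  ∀ j : Fin M, (v j).IsHomogeneous (e - dg j) ∧ (e < dg j → v j = 0)

end Koszul

end GBPaper

namespace GBPaper

/-- The top part `h|_{y=0}` of a homogeneous polynomial in `R' = R[y]`,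
viewed as an element of `R = K[x_1,…,x_n]`. -/
noncomputable def topPartR {K : Type*} [Field K] {n : ℕ}
    (g : MvPolynomial (Fin (n + 1)) K) : MvPolynomial (Fin n) K :=
  MvPolynomial.aeval (Fin.lastCases 0 fun i => MvPolynomial.X i) g

end GBPaper

namespace GBPaper

lemma lm_mem_support {K : Type*} [Field K] {σ : Type*} (m : MonomialOrder σ)
    {f : MvPolynomial σ K} (hf : f ≠ 0) : lm m f ∈ f.support := by
  obtain ⟨s, hs, he⟩ := Finset.exists_mem_eq_sup f.support
    (MvPolynomial.support_nonempty.mpr hf) (fun s => m.toSyn s)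
  have h : lm m f = s := by rw [lm, he, AddEquiv.symm_apply_apply]
  rw [h]; exact hs

lemma toSyn_le_lm {K : Type*} [Field K] {σ : Type*} (m : MonomialOrder σ)
    {f : MvPolynomial σ K} {s : σ →₀ ℕ} (hs : s ∈ f.support) :
    m.toSyn s ≤ m.toSyn (lm m f) := by
  rw [lm, AddEquiv.apply_symm_apply]
  exact Finset.le_sup hs

lemma lm_monomial {K : Type*} [Field K] {σ : Type*} (m : MonomialOrder σ)
    (s : σ →₀ ℕ) : lm m (MvPolynomial.monomial s (1 : K)) = s := by
  classical
  rw [lm, MvPolynomial.support_monomial]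
  simp

lemma totalDegree_le_degree_lm {K : Type*} [Field K] {σ : Type*}
    (m : MonomialOrder σ) (hm : MonIsGraded m) {f : MvPolynomial σ K}
    (hf : f ≠ 0) : f.totalDegree ≤ (lm m f).degree := by
  obtain ⟨s, hs, he⟩ := Finset.exists_mem_eq_sup f.support
    (MvPolynomial.support_nonempty.mpr hf) (fun s => s.sum fun _ e => e)
  have hdeg : f.totalDegree = s.degree := he
  rw [hdeg]
  by_contra hlt
  push_neg at hlt
  exact absurd (toSyn_le_lm m hs) (not_le.mpr (hm _ _ hlt))

lemma degree_add' {σ : Type*} (a b : σ →₀ ℕ) :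
    (a + b).degree = a.degree + b.degree := by
  simp [Finsupp.degree_eq_weight_one, map_add]

lemma degree_single' {σ : Type*} (i : σ) : (Finsupp.single i 1).degree = 1 := by
  simp [Finsupp.degree_single]

lemma monomial_mem_of_deg {K : Type*} [Field K] {σ : Type*}
    {I : Ideal (MvPolynomial σ K)} {D : ℕ}
    (hD : ∀ f : MvPolynomial σ K, f.IsHomogeneous D → f ∈ I) :
    ∀ d : ℕ, ∀ s : σ →₀ ℕ, s.degree = D + d →
      MvPolynomial.monomial s (1 : K) ∈ I := by
  intro d
  induction d with
  | zero =>
    intro s hs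
    exact hD _ (MvPolynomial.isHomogeneous_monomial _ (by simpa using hs))
  | succ d ih =>
    intro s hs
    have hs0 : s ≠ 0 := by
      intro h; rw [h, map_zero] at hs; omega
    obtain ⟨i, hi⟩ : ∃ i, s i ≠ 0 := by
      by_contra h; push_neg at h
      exact hs0 (Finsupp.ext fun i => h i)
    have hle : Finsupp.single i 1 ≤ s :=
      Finsupp.single_le_iff.mpr (Nat.one_le_iff_ne_zero.mpr hi)
    set s' := s - Finsupp.single i 1 with hs'
    have hsum : s' + Finsupp.single i 1 = s := tsub_add_cancel_of_le hle
    have hdeg' : s'.degree = D + d := by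
      have := degree_add' s' (Finsupp.single i 1)
      rw [hsum, degree_single'] at this
      omega
    have : MvPolynomial.monomial s (1 : K)
        = MvPolynomial.X i ^ 1 * MvPolynomial.monomial s' (1 : K) := by
      rw [← MvPolynomial.monomial_single_add, add_comm, hsum]
    rw [this]
    exact Ideal.mul_mem_left _ _ (ih s' hdeg')

end GBPaper

open GBPaper

/-- every element of the reduced Gröbner basis of a homogeneous ideal
`I` with Artinian quotient, w.r.t. a graded monomial ordering, has degree at most
the degree of regularity of `I`. -/
theorem stmt0 {K : Type*} [Field K] {n : ℕ}
    (I : Ideal (MvPolynomial (Fin n) K))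
    (hIhom : IsHomogeneousIdeal I)
    (hArt : ∃ d : ℕ, ∀ f : MvPolynomial (Fin n) K, f.IsHomogeneous d → f ∈ I)
    (m : MonomialOrder (Fin n)) (hm : MonIsGraded m)
    (G : Finset (MvPolynomial (Fin n) K)) (hG : IsReducedGB m I G) :
    ∀ g ∈ G, g.totalDegree ≤ degReg K I := by
  intro g hg
  by_contra hcon
  push_neg at hcon
  set D := degReg K I with hD
  have hDmem : ∀ f : MvPolynomial (Fin n) K, f.IsHomogeneous D → f ∈ I :=
    Nat.sInf_mem hArt
  have hg0 : g ≠ 0 := fun h => hG.zero_not_mem (h ▸ hg)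
  have hsupp := lm_mem_support m hg0
  have hdeg : D < (lm m g).degree :=
    lt_of_lt_of_le hcon (totalDegree_le_degree_lm m hm hg0)
  have hne : lm m g ≠ 0 := by
    intro h; rw [h, map_zero] at hdeg; omega
  obtain ⟨i, hi⟩ : ∃ i, lm m g i ≠ 0 := by
    by_contra h; push_neg at h
    exact hne (Finsupp.ext fun i => h i)
  have hle : Finsupp.single i 1 ≤ lm m g :=
    Finsupp.single_le_iff.mpr (Nat.one_le_iff_ne_zero.mpr hi)
  set s' := lm m g - Finsupp.single i 1 with hs'
  have hsum : s' + Finsupp.single i 1 = lm m g := tsub_add_cancel_of_le hle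
  have hdegs' : s'.degree + 1 = (lm m g).degree := by
    have := degree_add' s' (Finsupp.single i 1)
    rw [hsum, degree_single'] at this
    omega
  have hmem : MvPolynomial.monomial s' (1 : K) ∈ I :=
    monomial_mem_of_deg hDmem (s'.degree - D) s' (by omega)
  have hne0 : MvPolynomial.monomial s' (1 : K) ≠ 0 := by
    simp [MvPolynomial.monomial_eq_zero]
  obtain ⟨g', hg', hled⟩ := hG.isGB _ hmem hne0
  rw [lm_monomial] at hled
  by_cases hgg : g' = g
  · subst hgg
    have h1 : lm m g' i ≤ s' i := hled i
    have h2 : s' i = lm m g' i - 1 := by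
      rw [hs', Finsupp.tsub_apply, Finsupp.single_eq_same]
    omega
  · exact hG.reduced g hg g' hg' (fun h => hgg h.symm) (lm m g) hsupp
      (hled.trans tsub_le_self)
end

section
/- Let R' = K[x_1,...,x_n,y] and let I be a homogeneous ideal of R'. Let ≺' be the homogenization (with respect to y) of a graded monomial ordering on K[x_1,...,x_n]. Suppose d_0 is a positive integer such that the multiplication-by-y map (R'/I)_{d_0-1} → (R'/I)_{d_0} is surjective, and for every d ≥ d_0 the multiplication-by-y map (R'/I)_d → (R'/I)_{d+1} is injective. Then every element of the reduced Gröbner basis of I with respect to ≺' has degree at most d_0. -/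
open MvPolynomial

open GBPaper

namespace GBHelper

open Finsupp MvPolynomial

variable {K : Type*} [Field K] {σ : Type*}

lemma lm_mem_support (m : MonomialOrder σ) {f : MvPolynomial σ K} (hf : f ≠ 0) :
    GBPaper.lm m f ∈ f.support := by
  obtain ⟨s, hs, hsup⟩ := Finset.exists_mem_eq_sup f.support
    (MvPolynomial.support_nonempty.mpr hf) (fun s => m.toSyn s)
  rw [GBPaper.lm, hsup, AddEquiv.symm_apply_apply]
  exact hs

lemma le_lm (m : MonomialOrder σ) {f : MvPolynomial σ K} {s : σ →₀ ℕ}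
    (hs : s ∈ f.support) : m.toSyn s ≤ m.toSyn (GBPaper.lm m f) := by
  rw [GBPaper.lm, AddEquiv.apply_symm_apply]
  exact Finset.le_sup hs

lemma lm_eq (m : MonomialOrder σ) {f : MvPolynomial σ K} {μ : σ →₀ ℕ}
    (hμ : μ ∈ f.support) (h : ∀ s ∈ f.support, m.toSyn s ≤ m.toSyn μ) :
    GBPaper.lm m f = μ := by
  rw [GBPaper.lm, le_antisymm (Finset.sup_le h) (Finset.le_sup hμ),
    AddEquiv.symm_apply_apply]

lemma degree_eq_sum {N : ℕ} (a : Fin N →₀ ℕ) : a.degree = ∑ i, a i :=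
  Finset.sum_subset (Finset.subset_univ _)
    (fun _ _ hi => Finsupp.notMem_support_iff.mp hi)

lemma degree_mono {N : ℕ} {a b : Fin N →₀ ℕ} (h : a ≤ b) : a.degree ≤ b.degree := by
  rw [degree_eq_sum, degree_eq_sum]
  exact Finset.sum_le_sum fun i _ => h i

lemma restr_degree {n : ℕ} (a : Fin (n + 1) →₀ ℕ) :
    (GBPaper.restr a).degree + a (Fin.last n) = a.degree := by
  rw [degree_eq_sum, degree_eq_sum, Fin.sum_univ_castSucc]
  congr 1

lemma totalDegree_eq_sup (f : MvPolynomial σ K) :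
    f.totalDegree = f.support.sup Finsupp.degree := rfl

lemma degree_le_totalDegree {f : MvPolynomial σ K} {s : σ →₀ ℕ} (hs : s ∈ f.support) :
    s.degree ≤ f.totalDegree := by
  rw [totalDegree_eq_sup]
  exact Finset.le_sup hs

lemma exists_max_degree {f : MvPolynomial σ K} (hf : f ≠ 0) :
    ∃ s ∈ f.support, s.degree = f.totalDegree := by
  obtain ⟨s, hs, hsup⟩ := Finset.exists_mem_eq_sup f.support
    (MvPolynomial.support_nonempty.mpr hf) Finsupp.degree
  exact ⟨s, hs, by rw [totalDegree_eq_sup, hsup]⟩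

lemma isHom_iff {f : MvPolynomial σ K} {d : ℕ} :
    f.IsHomogeneous d ↔ ∀ s ∈ f.support, s.degree = d := by
  constructor
  · intro h s hs
    rw [show (Finsupp.degree s) = Finsupp.weight 1 s from DFunLike.congr_fun Finsupp.degree_eq_weight_one s]
    exact h (MvPolynomial.mem_support_iff.mp hs)
  · intro h s hs
    rw [← show (Finsupp.degree s) = Finsupp.weight 1 s from DFunLike.congr_fun Finsupp.degree_eq_weight_one s]
    exact h s (MvPolynomial.mem_support_iff.mpr hs)

end GBHelper

namespace GBHelper

lemma degree_add {N : ℕ} (a b : Fin N →₀ ℕ) :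
    (a + b).degree = a.degree + b.degree := by
  rw [degree_eq_sum, degree_eq_sum, degree_eq_sum, ← Finset.sum_add_distrib]
  exact Finset.sum_congr rfl fun i _ => Finsupp.add_apply a b i

lemma degree_single {N : ℕ} (i : Fin N) (k : ℕ) :
    (Finsupp.single i k).degree = k := by
  rw [degree_eq_sum]
  rw [Finset.sum_eq_single_of_mem i (Finset.mem_univ i)]
  · exact Finsupp.single_eq_same
  · intro j _ hj
    exact Finsupp.single_eq_of_ne' (Ne.symm hj)

end GBHelper
/-- if multiplication by `y` on `R'/I` is surjective in degree `d₀`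
and injective in all degrees `≥ d₀`, then the reduced Gröbner basis of `I` with
respect to a homogenized graded monomial ordering lives in degrees `≤ d₀`. -/
theorem stmt1 {K : Type*} [Field K] {n : ℕ}
    (I : Ideal (MvPolynomial (Fin (n + 1)) K))
    (hIhom : IsHomogeneousIdeal I)
    (m' : MonomialOrder (Fin (n + 1))) (m₀ : MonomialOrder (Fin n))
    (hm₀ : MonIsGraded m₀) (hm' : IsHomogenizationOrder m' m₀)
    (d₀ : ℕ) (hd₀ : 0 < d₀)
    (hsurj : ∀ f : MvPolynomial (Fin (n + 1)) K, f.IsHomogeneous d₀ →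
      ∃ g : MvPolynomial (Fin (n + 1)) K, g.IsHomogeneous (d₀ - 1) ∧
        f - yvar K n * g ∈ I)
    (hinj : ∀ d : ℕ, d₀ ≤ d → ∀ f : MvPolynomial (Fin (n + 1)) K,
      f.IsHomogeneous d → yvar K n * f ∈ I → f ∈ I)
    (G : Finset (MvPolynomial (Fin (n + 1)) K)) (hG : IsReducedGB m' I G) :
    ∀ g ∈ G, g.totalDegree ≤ d₀ := by
  intro g hgG
  by_contra hgt
  push_neg at hgt
  set d := g.totalDegree with hd
  have hg0 : g ≠ 0 := fun h => hG.zero_not_mem (h ▸ hgG)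
  have hgI : g ∈ I := hG.subset hgG
  have hgraded : ∀ a b : Fin (n + 1) →₀ ℕ, a.degree < b.degree →
      m'.toSyn a < m'.toSyn b := fun a b h => (hm' a b).mpr (Or.inl h)
  -- the leading monomial of any nonzero f has degree equal to totalDegree f
  have hlm_deg : ∀ f : MvPolynomial (Fin (n + 1)) K, f ≠ 0 →
      (lm m' f).degree = f.totalDegree := by
    intro f hf
    obtain ⟨s, hs, hsd⟩ := GBHelper.exists_max_degree (K := K) hf
    refine le_antisymm (GBHelper.degree_le_totalDegree (GBHelper.lm_mem_support m' hf)) ?_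
    by_contra hlt
    push_neg at hlt
    rw [← hsd] at hlt
    exact absurd (GBHelper.le_lm m' hs) (not_le.mpr (hgraded _ _ hlt))
  -- g is homogeneous of degree d
  have hhom : ∀ s ∈ g.support, s.degree = d := by
    intro s hs
    by_contra hne
    have hlt : s.degree < d := lt_of_le_of_ne (GBHelper.degree_le_totalDegree hs) hne
    set h := MvPolynomial.homogeneousComponent s.degree g with hh
    have hsupph : ∀ t ∈ h.support, t ∈ g.support ∧ t.degree = s.degree := by
      intro t ht
      rw [MvPolynomial.mem_support_iff, hh, MvPolynomial.coeff_homogeneousComponent] at ht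
      split at ht
      · exact ⟨MvPolynomial.mem_support_iff.mpr ht, by assumption⟩
      · exact absurd rfl ht
    have hh0 : h ≠ 0 := by
      intro h0
      have : MvPolynomial.coeff s h = MvPolynomial.coeff s g := by
        rw [hh, MvPolynomial.coeff_homogeneousComponent, if_pos rfl]
      rw [h0] at this
      exact MvPolynomial.mem_support_iff.mp hs this.symm
    obtain ⟨g', hg'G, hg'le⟩ := hG.isGB h (hIhom g hgI s.degree) hh0
    obtain ⟨hmemg, hdegh⟩ := hsupph _ (GBHelper.lm_mem_support m' hh0)
    by_cases hgg' : g' = g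
    · subst hgg'
      have h1 : (lm m' g').degree ≤ (lm m' h).degree := GBHelper.degree_mono hg'le
      have h2 : (lm m' g').degree = d := hlm_deg g' hg0
      omega
    · exact hG.reduced g hgG g' hg'G (fun hEq => hgg' hEq.symm) (lm m' h) hmemg hg'le
  have hμg : lm m' g ∈ g.support := GBHelper.lm_mem_support m' hg0
  have hμd : (lm m' g).degree = d := hhom _ hμg
  by_cases hy : (lm m' g) (Fin.last n) = 0
  · -- Case B : leading monomial of g is free of y
    have hμ0 : lm m' g ≠ 0 := by
      intro h0
      rw [h0, map_zero] at hμd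
      omega
    obtain ⟨i, hi⟩ : ∃ i, (lm m' g) i ≠ 0 := by
      by_contra hc
      push_neg at hc
      exact hμ0 (Finsupp.ext hc)
    have hine : i ≠ Fin.last n := fun hEq => hi (hEq ▸ hy)
    set μ' := lm m' g - Finsupp.single i 1 with hμ'
    have hsplit : Finsupp.single i 1 + μ' = lm m' g := by
      ext j
      rw [Finsupp.add_apply, hμ', Finsupp.tsub_apply, Finsupp.single_apply]
      by_cases hj : i = j
      · subst hj
        simp only [if_true, eq_self_iff_true, if_pos]
        omega
      · simp [hj]
    have hμ'd : μ'.degree = d - 1 := by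
      have h1 := GBHelper.degree_add (Finsupp.single i 1) μ'
      rw [hsplit, GBHelper.degree_single] at h1
      omega
    have hμ'last : μ' (Fin.last n) = 0 := by
      rw [hμ', Finsupp.tsub_apply, Finsupp.single_eq_of_ne' hine, hy]
      omega
    -- key surjectivity lemma, iterated
    have key : ∀ k : ℕ, ∀ s : Fin (n + 1) →₀ ℕ, s.degree = d₀ + k →
        ∃ b : MvPolynomial (Fin (n + 1)) K, b.IsHomogeneous (d₀ + k - 1) ∧
          MvPolynomial.monomial s (1 : K) - yvar K n * b ∈ I := by
      intro k
      induction k with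
      | zero =>
        intro s hs
        obtain ⟨b, hb1, hb2⟩ := hsurj (MvPolynomial.monomial s 1)
          (MvPolynomial.isHomogeneous_monomial 1 (by omega))
        exact ⟨b, by simpa using hb1, hb2⟩
      | succ k ih =>
        intro s hs
        have hs0 : s ≠ 0 := by
          intro h0
          rw [h0, map_zero] at hs
          omega
        obtain ⟨j, hj⟩ : ∃ j, s j ≠ 0 := by
          by_contra hc
          push_neg at hc
          exact hs0 (Finsupp.ext hc)
        set s' := s - Finsupp.single j 1 with hs'
        have hsplit' : Finsupp.single j 1 + s' = s := by
          ext l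
          rw [Finsupp.add_apply, hs', Finsupp.tsub_apply, Finsupp.single_apply]
          by_cases hl : j = l
          · subst hl
            simp only [if_true, eq_self_iff_true, if_pos]
            omega
          · simp [hl]
        have hs'd : s'.degree = d₀ + k := by
          have h1 := GBHelper.degree_add (Finsupp.single j 1) s'
          rw [hsplit', GBHelper.degree_single] at h1
          omega
        obtain ⟨b, hb1, hb2⟩ := ih s' hs'd
        refine ⟨MvPolynomial.X j * b, ?_, ?_⟩
        · have h2 := (MvPolynomial.isHomogeneous_X K j).mul hb1
          have heq : d₀ + (k + 1) - 1 = 1 + (d₀ + k - 1) := by omega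
          rw [heq]
          exact h2
        · have heq : MvPolynomial.monomial s (1 : K) - yvar K n * (MvPolynomial.X j * b)
              = MvPolynomial.X j * (MvPolynomial.monomial s' (1 : K) - yvar K n * b) := by
            rw [mul_sub, ← hsplit', MvPolynomial.monomial_single_add, pow_one]
            ring
          rw [heq]
          exact Ideal.mul_mem_left I _ hb2
    obtain ⟨b, hb1, hbI⟩ := key (d - 1 - d₀) μ' (by omega)
    have hbdeg : ∀ u ∈ b.support, u.degree = d - 2 := by
      intro u hu
      have := GBHelper.isHom_iff.mp hb1 u hu
      omega
    have hysupp : ∀ t ∈ (yvar K n * b).support,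
        ∃ u ∈ b.support, t = Finsupp.single (Fin.last n) 1 + u := by
      intro t ht
      simp only [GBPaper.yvar] at ht
      rw [MvPolynomial.support_X_mul] at ht
      obtain ⟨u, hu, rfl⟩ := Finset.mem_map.mp ht
      exact ⟨u, hu, rfl⟩
    have hcoeff : MvPolynomial.coeff μ'
        (MvPolynomial.monomial μ' (1 : K) - yvar K n * b) = 1 := by
      rw [MvPolynomial.coeff_sub, MvPolynomial.coeff_monomial, if_pos rfl]
      have hz : MvPolynomial.coeff μ' (yvar K n * b) = 0 := by
        by_contra hc
        obtain ⟨u, hu, hEq⟩ := hysupp μ' (MvPolynomial.mem_support_iff.mpr hc)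
        have : μ' (Fin.last n) = 1 + u (Fin.last n) := by
          rw [hEq, Finsupp.add_apply, Finsupp.single_eq_same]
        omega
      rw [hz]
      ring
    have hμ'mem : μ' ∈ (MvPolynomial.monomial μ' (1 : K) - yvar K n * b).support :=
      MvPolynomial.mem_support_iff.mpr (by rw [hcoeff]; exact one_ne_zero)
    have ha0 : MvPolynomial.monomial μ' (1 : K) - yvar K n * b ≠ 0 := by
      intro h0
      rw [h0] at hμ'mem
      simp at hμ'mem
    have hmax : ∀ s ∈ (MvPolynomial.monomial μ' (1 : K) - yvar K n * b).support,
        m'.toSyn s ≤ m'.toSyn μ' := by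
      classical
      intro s hs
      have hsub := MvPolynomial.support_sub _ (MvPolynomial.monomial μ' (1 : K)) (yvar K n * b) hs
      rcases Finset.mem_union.mp hsub with h1 | h1
      · have : s = μ' := by
          have := MvPolynomial.support_monomial (a := (1 : K)) (s := μ') ▸ h1
          simpa [one_ne_zero] using this
        rw [this]
      · obtain ⟨u, hu, rfl⟩ := hysupp s h1
        have hud : u.degree = d - 2 := hbdeg u hu
        have hsd : (Finsupp.single (Fin.last n) 1 + u).degree = d - 1 := by
          rw [GBHelper.degree_add, GBHelper.degree_single]
          omega
        have hrs := GBHelper.restr_degree (Finsupp.single (Fin.last n) 1 + u)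
        have hrμ := GBHelper.restr_degree μ'
        have hlast : ((Finsupp.single (Fin.last n) 1 + u : Fin (n + 1) →₀ ℕ)) (Fin.last n) ≠ 0 := by
          rw [Finsupp.add_apply, Finsupp.single_eq_same]
          omega
        have hdlt : (restr (Finsupp.single (Fin.last n) 1 + u)).degree
            < (restr μ').degree := by omega
        exact le_of_lt ((hm' _ _).mpr (Or.inr ⟨by omega, hm₀ _ _ hdlt⟩))
    have hlma : lm m' (MvPolynomial.monomial μ' (1 : K) - yvar K n * b) = μ' :=
      GBHelper.lm_eq m' hμ'mem hmax
    obtain ⟨g', hg'G, hg'le⟩ := hG.isGB _ hbI ha0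
    rw [hlma] at hg'le
    have hne : g ≠ g' := by
      intro hEq
      have h1 : (lm m' g').degree ≤ μ'.degree := GBHelper.degree_mono hg'le
      rw [← hEq, hμd] at h1
      omega
    exact hG.reduced g hgG g' hg'G hne _ hμg
      (le_trans hg'le (hμ' ▸ tsub_le_self))
  · -- Case A : leading monomial of g is divisible by y, hence so is all of g
    have hall : ∀ s ∈ g.support, s (Fin.last n) ≠ 0 := by
      intro s hs h0
      have hsd : s.degree = d := hhom s hs
      have hrs := GBHelper.restr_degree s
      have hrμ := GBHelper.restr_degree (lm m' g)
      have h1 : (restr (lm m' g)).degree < (restr s).degree := by omega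
      have h2 : m'.toSyn (lm m' g) < m'.toSyn s :=
        (hm' _ _).mpr (Or.inr ⟨by omega, hm₀ _ _ h1⟩)
      exact absurd (GBHelper.le_lm m' hs) (not_le.mpr h2)
    have hmod : MvPolynomial.modMonomial g (Finsupp.single (Fin.last n) 1) = 0 := by
      classical
      ext t
      rw [MvPolynomial.coeff_zero]
      by_cases hle : Finsupp.single (Fin.last n) 1 ≤ t
      · exact MvPolynomial.coeff_modMonomial_of_le g hle
      · rw [MvPolynomial.coeff_modMonomial_of_not_le g hle]
        by_contra hc
        have ht := hall t (MvPolynomial.mem_support_iff.mpr hc)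
        exact hle (Finsupp.single_le_iff.mpr (by omega))
    set p := MvPolynomial.divMonomial g (Finsupp.single (Fin.last n) 1) with hp
    have hgp : MvPolynomial.X (Fin.last n) * p = g := by
      have h1 := MvPolynomial.divMonomial_add_modMonomial_single g (Fin.last n)
      rw [hmod, add_zero] at h1
      exact h1
    have hp0 : p ≠ 0 := by
      intro h0
      rw [h0, mul_zero] at hgp
      exact hg0 hgp.symm
    have hpsup : ∀ t ∈ p.support, Finsupp.single (Fin.last n) 1 + t ∈ g.support := by
      intro t ht
      rw [MvPolynomial.mem_support_iff] at ht ⊢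
      rw [← hgp, MvPolynomial.coeff_X_mul]
      exact ht
    have hpdeg : ∀ t ∈ p.support, t.degree = d - 1 := by
      intro t ht
      have h1 := hhom _ (hpsup t ht)
      rw [GBHelper.degree_add, GBHelper.degree_single] at h1
      omega
    have hpI : p ∈ I := by
      apply hinj (d - 1) (by omega) p (GBHelper.isHom_iff.mpr hpdeg)
      show MvPolynomial.X (Fin.last n) * p ∈ I
      rw [hgp]
      exact hgI
    obtain ⟨g', hg'G, hg'le⟩ := hG.isGB p hpI hp0
    have hlmp := GBHelper.lm_mem_support m' hp0
    have hne : g ≠ g' := by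
      intro hEq
      have h1 : (lm m' g').degree ≤ (lm m' p).degree := GBHelper.degree_mono hg'le
      have h2 := hpdeg _ hlmp
      rw [← hEq, hμd] at h1
      omega
    exact hG.reduced g hgG g' hg'G hne _ (hpsup _ hlmp)
      (le_trans hg'le (self_le_add_left _ _))
end

section
/- Let f_1,...,f_m be homogeneous polynomials of positive degrees d_1,...,d_m in R = K[x_1,...,x_n] and let d ≥ max{d_i}. The sequence (f_1,...,f_m) is d-regular (i.e., for each i, the multiplication map by f_i from (R/⟨f_1,...,f_{i-1}⟩)_{t-d_i} to (R/⟨f_1,...,f_{i-1}⟩)_t is injective for all t with d_i ≤ t < d) if and only if the Hilbert series of R/⟨f_1,...,f_m⟩ is congruent to ∏_{j=1}^m (1-z^{d_j})/(1-z)^n modulo z^d. -/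
open MvPolynomial

open GBPaper

open PowerSeries

namespace GBAux

/-- Exponent vectors of degree `t` correspond to multisets of size `t`. -/
noncomputable def degEquiv (n t : ℕ) : {d : Fin n →₀ ℕ // d.degree = t} ≃ Sym (Fin n) t where
  toFun d := ⟨Finsupp.toMultiset d.1, by rw [Finsupp.card_toMultiset]; exact d.2⟩
  invFun m := ⟨Multiset.toFinsupp m.1, by
    have := Finsupp.card_toMultiset (Multiset.toFinsupp m.1)
    rw [Multiset.toFinsupp_toMultiset] at this
    rw [show Finsupp.degree (Multiset.toFinsupp m.1) =
      (Multiset.toFinsupp m.1).sum fun _ => id from rfl, ← this, m.2]⟩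
  left_inv d := by ext1; simp
  right_inv m := by ext1; simp

noncomputable instance symFintype (n t : ℕ) :
    Fintype {d : Fin n →₀ ℕ // d.degree = t} :=
  Fintype.ofEquiv _ (degEquiv n t).symm

noncomputable instance symFintype' (n t : ℕ) :
    Fintype ({d : Fin n →₀ ℕ | d.degree = t} : Set (Fin n →₀ ℕ)) :=
  symFintype n t

lemma card_deg (n t : ℕ) :
    Fintype.card {d : Fin n →₀ ℕ // d.degree = t} = (n + t - 1).choose t := by
  rw [Fintype.card_congr (degEquiv n t), Sym.card_sym_eq_multichoose,
    Fintype.card_fin, Nat.multichoose_eq]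

variable {K : Type*} [Field K] {n : ℕ}

/-- The degree-`t` piece of the polynomial ring is finite dimensional. -/
noncomputable def homEquiv (t : ℕ) :
    (homogeneousSubmodule (Fin n) K t) ≃ₗ[K]
      (({d : Fin n →₀ ℕ | d.degree = t} : Set (Fin n →₀ ℕ)) →₀ K) :=
  (LinearEquiv.ofEq _ _
    (homogeneousSubmodule_eq_finsupp_supported (Fin n) K t)).trans
    (AddMonoidAlgebra.supportedEquivFinsupp _)

instance homFD (t : ℕ) : FiniteDimensional K (homogeneousSubmodule (Fin n) K t) := by
  have : FiniteDimensional K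
      (({d : Fin n →₀ ℕ | d.degree = t} : Set (Fin n →₀ ℕ)) →₀ K) :=
    Module.Finite.equiv (Finsupp.linearEquivFunOnFinite K K _).symm
  exact Module.Finite.equiv (homEquiv t).symm

lemma finrank_V (t : ℕ) :
    Module.finrank K (homogeneousSubmodule (Fin n) K t) = (n + t - 1).choose t := by
  rw [(homEquiv (K := K) t).finrank_eq,
    (Finsupp.linearEquivFunOnFinite K K _).finrank_eq,
    Module.finrank_fintype_fun_eq_card]
  exact (Fintype.card_congr (Equiv.refl _)).trans (card_deg n t)


lemma coeff_iosp (n t : ℕ) :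
    (PowerSeries.coeff t) ((invOneSubPow ℤ n : (PowerSeries ℤ)ˣ) : PowerSeries ℤ)
      = ((n + t - 1).choose t : ℤ) := by
  cases n with
  | zero =>
    rw [invOneSubPow_zero, Units.val_one, PowerSeries.coeff_one]
    cases t with
    | zero => simp
    | succ t =>
      simp [Nat.choose_eq_zero_of_lt (Nat.lt_succ_of_le (Nat.sub_le t 0))]
  | succ n =>
    rw [invOneSubPow_val_succ_eq_mk_add_choose, coeff_mk]
    have h1 : n + 1 + t - 1 = n + t := by omega
    have h2 : (n + t).choose n = (n + t).choose t := by
      have := Nat.choose_symm (n := n + t) (k := t) (Nat.le_add_left t n)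
      simpa using this
    rw [h1, ← h2]

variable {K : Type*} [Field K] {n : ℕ}

/-- Homogeneous component of a product with a homogeneous polynomial. -/
lemma hc_mul_hom (c f : MvPolynomial (Fin n) K) {e : ℕ} (hf : f.IsHomogeneous e) (t : ℕ) :
    homogeneousComponent t (c * f) =
      if e ≤ t then homogeneousComponent (t - e) c * f else 0 := by
  conv_lhs => rw [← sum_homogeneousComponent c, Finset.sum_mul, map_sum]
  have hterm : ∀ i, homogeneousComponent t (homogeneousComponent i c * f) =
      if t = i + e then homogeneousComponent i c * f else 0 := by
    intro i
    exact homogeneousComponent_of_mem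
      ((homogeneousComponent_isHomogeneous i c).mul hf)
  rw [Finset.sum_congr rfl fun i _ => hterm i]
  by_cases he : e ≤ t
  · rw [if_pos he]
    have hiff : ∀ i, (t = i + e) ↔ (i = t - e) := by intro i; omega
    simp_rw [hiff]
    rw [Finset.sum_ite_eq' (Finset.range (c.totalDegree + 1)) (t - e)
      (fun i => homogeneousComponent i c * f)]
    by_cases hmem : t - e ∈ Finset.range (c.totalDegree + 1)
    · rw [if_pos hmem]
    · rw [if_neg hmem]
      rw [homogeneousComponent_eq_zero _ c (by
        simp only [Finset.mem_range] at hmem; omega), zero_mul]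
  · rw [if_neg he]
    apply Finset.sum_eq_zero
    intro i _
    rw [if_neg (by omega)]

/-- An ideal spanned by homogeneous polynomials contains all homogeneous
components of its members. -/
lemma span_homog_component {s : Set (MvPolynomial (Fin n) K)}
    (hs : ∀ g ∈ s, ∃ e, g.IsHomogeneous e) {p : MvPolynomial (Fin n) K}
    (hp : p ∈ Ideal.span s) (t : ℕ) :
    homogeneousComponent t p ∈ Ideal.span s := by
  induction hp using Submodule.span_induction generalizing t with
  | mem g hg =>
    obtain ⟨e, he⟩ := hs g hg
    rw [homogeneousComponent_of_mem he]
    split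
    · exact Ideal.subset_span hg
    · exact Ideal.zero_mem _
  | zero => rw [map_zero]; exact Ideal.zero_mem _
  | add x y _ _ hx hy => rw [map_add]; exact Ideal.add_mem _ (hx t) (hy t)
  | smul c p hp hcp =>
    rw [smul_eq_mul]
    have hrw : c * p = ∑ i ∈ Finset.range (p.totalDegree + 1),
        c * homogeneousComponent i p := by
      conv_lhs => rw [← sum_homogeneousComponent p]
      rw [Finset.mul_sum]
    rw [hrw, map_sum]
    apply Ideal.sum_mem
    intro i _
    rw [hc_mul_hom c _ (homogeneousComponent_isHomogeneous i p) t]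
    split
    · exact Ideal.mul_mem_left _ _ (hcp i)
    · exact Ideal.zero_mem _


lemma finrank_map_add {V₁ V₂ : Type*} [AddCommGroup V₁] [Module K V₁]
    [AddCommGroup V₂] [Module K V₂]
    (p : Submodule K V₁) [FiniteDimensional K p] (φ : V₁ →ₗ[K] V₂) :
    Module.finrank K (p.map φ) + Module.finrank K (LinearMap.ker φ ⊓ p : Submodule K V₁)
      = Module.finrank K p := by
  have h := LinearMap.finrank_range_add_finrank_ker (φ.comp p.subtype)
  rw [LinearMap.range_comp, Submodule.range_subtype, LinearMap.ker_comp] at h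
  have h2 : Submodule.comap p.subtype (LinearMap.ker φ)
      = Submodule.comap p.subtype (LinearMap.ker φ ⊓ p) := by
    ext x
    simp [x.2]
  rw [h2, (Submodule.comapSubtypeEquivOfLe (inf_le_right : LinearMap.ker φ ⊓ p ≤ p)).finrank_eq] at h
  exact h


local notation "V(" t ")" => homogeneousSubmodule (Fin n) K t

lemma map_mulRight_le {f : MvPolynomial (Fin n) K} {e : ℕ} (hf : f.IsHomogeneous e)
    {t : ℕ} (het : e ≤ t) :
    Submodule.map (LinearMap.mulRight K f) (V(t - e)) ≤ V(t) := by
  rintro x ⟨g, hg, rfl⟩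
  have hg' : MvPolynomial.IsHomogeneous g (t - e) := hg
  have h2 := hg'.mul hf
  rw [Nat.sub_add_cancel het] at h2
  exact h2

lemma piece_sup (J : Ideal (MvPolynomial (Fin n) K))
    (hJ : ∀ p ∈ J, ∀ t, homogeneousComponent t p ∈ J)
    {f : MvPolynomial (Fin n) K} {e : ℕ} (hf : f.IsHomogeneous e)
    {t : ℕ} (het : e ≤ t) :
    ((J ⊔ Ideal.span {f}).restrictScalars K) ⊓ V(t)
      = ((J.restrictScalars K) ⊓ V(t))
          ⊔ (Submodule.map (LinearMap.mulRight K f) (V(t - e))) := by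
  apply le_antisymm
  · rintro p hp
    obtain ⟨hp', hpt⟩ := Submodule.mem_inf.mp hp
    rw [Submodule.restrictScalars_mem] at hp'
    obtain ⟨j, hj, q, hq, rfl⟩ := Submodule.mem_sup.mp hp'
    obtain ⟨a, rfl⟩ := Ideal.mem_span_singleton'.mp hq
    rw [mem_homogeneousSubmodule] at hpt
    have hself : homogeneousComponent t (j + a * f) = j + a * f :=
      (homogeneousComponent_of_mem hpt).trans (if_pos rfl)
    rw [← hself, map_add, hc_mul_hom a f hf t, if_pos het]
    apply Submodule.add_mem_sup
    · exact Submodule.mem_inf.mpr ⟨Submodule.restrictScalars_mem _ _ _ |>.mpr (hJ j hj t),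
        homogeneousComponent_mem t j⟩
    · exact ⟨homogeneousComponent (t - e) a, homogeneousComponent_mem _ a, rfl⟩
  · apply sup_le
    · exact inf_le_inf_right _ (fun x hx => by
        rw [Submodule.restrictScalars_mem] at hx ⊢
        exact Ideal.mem_sup_left hx)
    · apply le_inf _ (map_mulRight_le hf het)
      rintro x ⟨g, _, rfl⟩
      rw [Submodule.restrictScalars_mem, LinearMap.mulRight_apply]
      exact Ideal.mem_sup_right (Ideal.mem_span_singleton'.mpr ⟨g, rfl⟩)

lemma piece_low (J : Ideal (MvPolynomial (Fin n) K))
    (hJ : ∀ p ∈ J, ∀ t, homogeneousComponent t p ∈ J)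
    {f : MvPolynomial (Fin n) K} {e : ℕ} (hf : f.IsHomogeneous e)
    {t : ℕ} (het : t < e) :
    ((J ⊔ Ideal.span {f}).restrictScalars K) ⊓ V(t)
      = (J.restrictScalars K) ⊓ V(t) := by
  apply le_antisymm
  · rintro p hp
    obtain ⟨hp', hpt⟩ := Submodule.mem_inf.mp hp
    rw [Submodule.restrictScalars_mem] at hp'
    obtain ⟨j, hj, q, hq, rfl⟩ := Submodule.mem_sup.mp hp'
    obtain ⟨a, rfl⟩ := Ideal.mem_span_singleton'.mp hq
    rw [mem_homogeneousSubmodule] at hpt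
    have hself : homogeneousComponent t (j + a * f) = j + a * f :=
      (homogeneousComponent_of_mem hpt).trans (if_pos rfl)
    refine Submodule.mem_inf.mpr ⟨?_, hp.2⟩
    rw [Submodule.restrictScalars_mem, ← hself, map_add, hc_mul_hom a f hf t,
      if_neg (by omega), add_zero]
    exact hJ j hj t
  · exact inf_le_inf_right _ (fun x hx => by
      rw [Submodule.restrictScalars_mem] at hx ⊢
      exact Ideal.mem_sup_left hx)


/-- The space of homogeneous `g` of degree `t - e` with `g * f ∈ J`. -/
noncomputable def Wmod (J : Ideal (MvPolynomial (Fin n) K)) (f : MvPolynomial (Fin n) K)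
    (s : ℕ) : Submodule K (MvPolynomial (Fin n) K) :=
  (homogeneousSubmodule (Fin n) K s) ⊓
    Submodule.comap (LinearMap.mulRight K f) (J.restrictScalars K)

lemma inf_map_eq (J : Ideal (MvPolynomial (Fin n) K))
    {f : MvPolynomial (Fin n) K} {e : ℕ} (hf : f.IsHomogeneous e)
    {t : ℕ} (het : e ≤ t) :
    ((J.restrictScalars K) ⊓ V(t)) ⊓
        Submodule.map (LinearMap.mulRight K f) (V(t - e))
      = Submodule.map (LinearMap.mulRight K f) (Wmod J f (t - e)) := by
  apply le_antisymm
  · rintro x ⟨hx1, g, hg, rfl⟩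
    exact ⟨g, ⟨hg, hx1.1⟩, rfl⟩
  · rintro x ⟨g, ⟨hg1, hg2⟩, rfl⟩
    exact ⟨⟨hg2, map_mulRight_le hf het ⟨g, hg1, rfl⟩⟩, g, hg1, rfl⟩

lemma ker_inf_eq (J : Ideal (MvPolynomial (Fin n) K))
    (f : MvPolynomial (Fin n) K) (s : ℕ) :
    LinearMap.ker (LinearMap.mulRight K f) ⊓ Wmod J f s
      = LinearMap.ker (LinearMap.mulRight K f) ⊓ V(s) := by
  apply le_antisymm
  · exact inf_le_inf_left _ inf_le_left
  · rintro x ⟨hx1, hx2⟩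
    have hx0 : x * f = 0 := hx1
    have hc : x ∈ Submodule.comap (LinearMap.mulRight K f) (J.restrictScalars K) := by
      simp only [Submodule.mem_comap, LinearMap.mulRight_apply, hx0]
      exact Submodule.zero_mem _
    exact ⟨hx1, hx2, hc⟩

lemma Jpart_le_W (J : Ideal (MvPolynomial (Fin n) K)) (f : MvPolynomial (Fin n) K)
    (s : ℕ) : (J.restrictScalars K) ⊓ V(s) ≤ Wmod J f s := by
  rintro x ⟨hx1, hx2⟩
  exact ⟨hx2, Ideal.mul_mem_right f J hx1⟩

instance WFD (J : Ideal (MvPolynomial (Fin n) K)) (f : MvPolynomial (Fin n) K)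
    (s : ℕ) : FiniteDimensional K (Wmod J f s) :=
  Submodule.finiteDimensional_of_le (inf_le_left : Wmod J f s ≤ V(s))

/-- The key dimension count for adding one homogeneous generator. -/
lemma count_step (J : Ideal (MvPolynomial (Fin n) K))
    (hJ : ∀ p ∈ J, ∀ t, homogeneousComponent t p ∈ J)
    {f : MvPolynomial (Fin n) K} {e : ℕ} (hf : f.IsHomogeneous e)
    {t : ℕ} (het : e ≤ t) :
    Module.finrank K (((J ⊔ Ideal.span {f}).restrictScalars K) ⊓ V(t) : Submodule K _)
        + Module.finrank K (Wmod J f (t - e))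
      = Module.finrank K ((J.restrictScalars K) ⊓ V(t) : Submodule K _)
        + Module.finrank K (V(t - e)) := by
  haveI : FiniteDimensional K ((J.restrictScalars K) ⊓ V(t) : Submodule K _) :=
    Submodule.finiteDimensional_of_le inf_le_right
  haveI : FiniteDimensional K (Submodule.map (LinearMap.mulRight K f) (V(t - e))) :=
    Submodule.finiteDimensional_of_le (map_mulRight_le hf het)
  have h1 := finrank_map_add (K := K) (V(t - e)) (LinearMap.mulRight K f)
  have h2 := finrank_map_add (K := K) (Wmod J f (t - e)) (LinearMap.mulRight K f)
  rw [ker_inf_eq J f (t - e)] at h2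
  have h3 := Submodule.finrank_sup_add_finrank_inf_eq
    ((J.restrictScalars K) ⊓ V(t) : Submodule K _) (Submodule.map (LinearMap.mulRight K f) (V(t - e)))
  rw [inf_map_eq J hf het, ← piece_sup J hJ hf het] at h3
  have h4 : Module.finrank K (Wmod J f (t - e))
      ≤ Module.finrank K (V(t - e) : Submodule K _) :=
    Submodule.finrank_mono inf_le_left
  omega


lemma hilb_eq (J : Ideal (MvPolynomial (Fin n) K)) (t : ℕ) :
    hilbertFn K J t
        + Module.finrank K ((J.restrictScalars K) ⊓ V(t) : Submodule K _)
      = Module.finrank K (V(t)) := by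
  have hker : LinearMap.ker (Ideal.Quotient.mkₐ K J).toLinearMap
      = J.restrictScalars K := by
    ext x
    simp only [LinearMap.mem_ker, AlgHom.toLinearMap_apply, Ideal.Quotient.mkₐ_eq_mk,
      Submodule.restrictScalars_mem]
    exact Ideal.Quotient.eq_zero_iff_mem
  have h := finrank_map_add (K := K) (V(t)) (Ideal.Quotient.mkₐ K J).toLinearMap
  rw [hker] at h
  exact h

section Seq

variable {M : ℕ} (f : Fin M → MvPolynomial (Fin n) K) (dg : Fin M → ℕ)

/-- The ideal generated by the first `k` polynomials. -/
noncomputable def Jk (k : ℕ) : Ideal (MvPolynomial (Fin n) K) :=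
  Ideal.span (f '' {j : Fin M | (j : ℕ) < k})

/-- The truncated series. -/
noncomputable def Tser (k : ℕ) : PowerSeries ℤ :=
  (∏ j ∈ Finset.univ.filter (fun j : Fin M => (j : ℕ) < k),
      (1 - (PowerSeries.X : PowerSeries ℤ) ^ dg j)) *
    ((invOneSubPow ℤ n : (PowerSeries ℤ)ˣ) : PowerSeries ℤ)

lemma Jk_hom (hhom : ∀ i, (f i).IsHomogeneous (dg i)) (k : ℕ) : ∀ p ∈ Jk f k, ∀ t, homogeneousComponent t p ∈ Jk f k :=
  fun p hp t => span_homog_component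
    (fun g hg => by obtain ⟨j, _, rfl⟩ := hg; exact ⟨dg j, hhom j⟩) hp t

lemma Jk_zero : Jk f 0 = ⊥ := by
  rw [Jk, show {j : Fin M | (j : ℕ) < 0} = ∅ by simp, Set.image_empty, Ideal.span_empty]

lemma Jk_M : Ideal.span (Set.range f) = Jk f M := by
  rw [Jk, show {j : Fin M | (j : ℕ) < M} = Set.univ from Set.eq_univ_of_forall fun j => j.isLt,
    Set.image_univ]

lemma prev_eq (i : Fin M) : prevIdeal f i = Jk f i.val := rfl

lemma Jk_succ {k : ℕ} (hk : k < M) :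
    Jk f (k + 1) = Jk f k ⊔ Ideal.span {f ⟨k, hk⟩} := by
  rw [Jk, Jk, show {j : Fin M | (j : ℕ) < k + 1}
      = {j : Fin M | (j : ℕ) < k} ∪ {⟨k, hk⟩} by
    ext j; simp [Fin.ext_iff]; omega, Set.image_union, Ideal.span_union,
    Set.image_singleton]

lemma Tser_zero : Tser (n := n) dg 0
    = ((invOneSubPow ℤ n : (PowerSeries ℤ)ˣ) : PowerSeries ℤ) := by
  rw [Tser, show Finset.univ.filter (fun j : Fin M => (j : ℕ) < 0) = ∅ by
    ext j; simp, Finset.prod_empty, one_mul]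

lemma Tser_M : semiRegSeries n dg = Tser (n := n) dg M := by
  rw [semiRegSeries, Tser, Finset.filter_true_of_mem fun j _ => j.isLt]

lemma Tser_succ {k : ℕ} (hk : k < M) :
    Tser (n := n) dg (k + 1)
      = (1 - (PowerSeries.X : PowerSeries ℤ) ^ dg ⟨k, hk⟩) * Tser (n := n) dg k := by
  rw [Tser, Tser, ← mul_assoc]
  congr 1
  rw [show Finset.univ.filter (fun j : Fin M => (j : ℕ) < k + 1)
      = insert ⟨k, hk⟩ (Finset.univ.filter (fun j : Fin M => (j : ℕ) < k)) by
    ext j; simp [Fin.ext_iff]; omega]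
  rw [Finset.prod_insert (by simp)]

lemma Tser_coeff_succ {k : ℕ} (hk : k < M) (t : ℕ) :
    PowerSeries.coeff t (Tser (n := n) dg (k + 1))
      = PowerSeries.coeff t (Tser (n := n) dg k)
        - (if dg ⟨k, hk⟩ ≤ t
            then PowerSeries.coeff (t - dg ⟨k, hk⟩) (Tser (n := n) dg k) else 0) := by
  rw [Tser_succ dg hk, sub_mul, one_mul, map_sub, PowerSeries.coeff_X_pow_mul']

end Seq

section Main

variable {M : ℕ} {f : Fin M → MvPolynomial (Fin n) K} {dg : Fin M → ℕ}
  (hhom : ∀ i, (f i).IsHomogeneous (dg i)) (hpos : ∀ i, 0 < dg i)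

include hhom hpos in
/-- Under injectivity up to degree `t`, the Hilbert function equals the
series coefficient. -/
lemma lemE : ∀ t : ℕ,
    (∀ i : Fin M, ∀ g : MvPolynomial (Fin n) K, ∀ e : ℕ,
      g.IsHomogeneous e → e + dg i ≤ t →
      g * f i ∈ prevIdeal f i → g ∈ prevIdeal f i) →
    ∀ k, k ≤ M →
      (hilbertFn K (Jk f k) t : ℤ) = PowerSeries.coeff t (Tser (n := n) dg k) := by
  intro t
  induction t using Nat.strong_induction_on with
  | _ t IHt =>
  intro Hinj k hkM
  induction k with
  | zero =>
    have h := hilb_eq (Jk f 0) t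
    have hb : ((Jk f 0).restrictScalars K ⊓ V(t) : Submodule K _) = ⊥ := by
      rw [Jk_zero]; simp
    rw [hb, finrank_bot, add_zero] at h
    rw [Tser_zero, coeff_iosp, Jk_zero f] at *
    rw [h, finrank_V]
  | succ k IHk =>
    have hk : k < M := hkM
    have IHk' := IHk (le_of_lt hk)
    set i₀ : Fin M := ⟨k, hk⟩ with hi₀
    have hd₀ : 0 < dg i₀ := hpos i₀
    have hJsucc := Jk_succ f hk
    by_cases het : dg i₀ ≤ t
    · -- main case
      have hcount := count_step (Jk f k) (Jk_hom f dg hhom k) (hhom i₀) het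
      rw [← hJsucc] at hcount
      -- the kernel space is trivial by injectivity
      have hW : Wmod (Jk f k) (f i₀) (t - dg i₀) = (Jk f k).restrictScalars K ⊓ V(t - dg i₀) := by
        refine le_antisymm ?_ (Jpart_le_W _ _ _)
        rintro g ⟨hg1, hg2⟩
        have hginj := Hinj i₀ g (t - dg i₀) hg1 (by omega)
        rw [prev_eq] at hginj
        exact ⟨hginj (by exact hg2), hg1⟩
      rw [hW] at hcount
      have h1 := hilb_eq (Jk f (k + 1)) t
      have h2 := hilb_eq (Jk f k) t
      have h3 := hilb_eq (Jk f k) (t - dg i₀)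
      have hlow := IHt (t - dg i₀) (by omega)
        (fun i g e' hg he' => Hinj i g e' hg (by omega)) k (le_of_lt hk)
      rw [Tser_coeff_succ dg hk, if_pos het, ← IHk', ← hlow]
      push_cast
      omega
    · -- low-degree case
      have hpiece := piece_low (Jk f k) (Jk_hom f dg hhom k) (hhom i₀) (show t < dg i₀ by omega)
      rw [← hJsucc] at hpiece
      have h1 := hilb_eq (Jk f (k + 1)) t
      have h2 := hilb_eq (Jk f k) t
      rw [hpiece] at h1
      rw [Tser_coeff_succ dg hk, if_neg het, sub_zero, ← IHk']
      push_cast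
      omega

include hhom hpos in
/-- One-step excess formula: under strict injectivity below degree `t`. -/
lemma lemF : ∀ t : ℕ,
    (∀ i : Fin M, ∀ g : MvPolynomial (Fin n) K, ∀ e : ℕ,
      g.IsHomogeneous e → e + dg i < t →
      g * f i ∈ prevIdeal f i → g ∈ prevIdeal f i) →
    ∀ k, k ≤ M →
      (hilbertFn K (Jk f k) t : ℤ) = PowerSeries.coeff t (Tser (n := n) dg k)
        + ∑ j ∈ Finset.univ.filter (fun j : Fin M => (j : ℕ) < k ∧ dg j ≤ t),
            ((Module.finrank K (Wmod (Jk f j.val) (f j) (t - dg j)) : ℤ)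
              - (Module.finrank K
                  (((Jk f j.val).restrictScalars K) ⊓ V(t - dg j) : Submodule K _) : ℤ)) := by
  intro t Hinj k hkM
  induction k with
  | zero =>
    rw [show Finset.univ.filter (fun j : Fin M => (j : ℕ) < 0 ∧ dg j ≤ t) = ∅ by
      ext j; simp, Finset.sum_empty, add_zero]
    have h := hilb_eq (Jk f 0) t
    have hb : ((Jk f 0).restrictScalars K ⊓ V(t) : Submodule K _) = ⊥ := by
      rw [Jk_zero]; simp
    rw [hb, finrank_bot, add_zero] at h
    rw [Tser_zero, coeff_iosp, h, finrank_V]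
  | succ k IHk =>
    have hk : k < M := hkM
    have IHk' := IHk (le_of_lt hk)
    have hd₀ : 0 < dg (⟨k, hk⟩ : Fin M) := hpos ⟨k, hk⟩
    have hJsucc := Jk_succ f hk
    by_cases het : dg (⟨k, hk⟩ : Fin M) ≤ t
    · have hcount := count_step (Jk f k) (Jk_hom f dg hhom k) (hhom ⟨k, hk⟩) het
      rw [← hJsucc] at hcount
      have h1 := hilb_eq (Jk f (k + 1)) t
      have h2 := hilb_eq (Jk f k) t
      have h3 := hilb_eq (Jk f k) (t - dg (⟨k, hk⟩ : Fin M))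
      have hlow := lemE hhom hpos (t - dg (⟨k, hk⟩ : Fin M))
        (fun i g e' hg he' => Hinj i g e' hg (by omega)) k (le_of_lt hk)
      have hset : Finset.univ.filter (fun j : Fin M => (j : ℕ) < k + 1 ∧ dg j ≤ t)
          = insert ⟨k, hk⟩ (Finset.univ.filter (fun j : Fin M => (j : ℕ) < k ∧ dg j ≤ t)) := by
        ext j
        simp only [Finset.mem_filter, Finset.mem_univ, true_and, Finset.mem_insert]
        constructor
        · rintro ⟨hj1, hj2⟩
          by_cases hjk : (j : ℕ) = k
          · left; exact Fin.ext hjk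
          · right; exact ⟨by omega, hj2⟩
        · rintro (rfl | ⟨hj1, hj2⟩)
          · exact ⟨by simp, het⟩
          · exact ⟨by omega, hj2⟩
      rw [hset, Finset.sum_insert (by simp), Tser_coeff_succ dg hk, if_pos het]
      simp only [Fin.val_mk]
      push_cast
      omega
    · have hpiece := piece_low (Jk f k) (Jk_hom f dg hhom k) (hhom ⟨k, hk⟩)
        (show t < dg (⟨k, hk⟩ : Fin M) by omega)
      rw [← hJsucc] at hpiece
      have h1 := hilb_eq (Jk f (k + 1)) t
      have h2 := hilb_eq (Jk f k) t
      rw [hpiece] at h1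
      have hset : Finset.univ.filter (fun j : Fin M => (j : ℕ) < k + 1 ∧ dg j ≤ t)
          = Finset.univ.filter (fun j : Fin M => (j : ℕ) < k ∧ dg j ≤ t) := by
        ext j
        simp only [Finset.mem_filter, Finset.mem_univ, true_and]
        constructor
        · rintro ⟨hj1, hj2⟩
          refine ⟨?_, hj2⟩
          by_cases hjk : (j : ℕ) = k
          · exfalso; have hje : j = (⟨k, hk⟩ : Fin M) := Fin.ext hjk
            rw [hje] at hj2; omega
          · omega
        · rintro ⟨hj1, hj2⟩; exact ⟨by omega, hj2⟩
      rw [hset, Tser_coeff_succ dg hk, if_neg het, sub_zero]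
      push_cast
      omega

end Main


end GBAux

open GBAux

/-- a sequence of homogeneous polynomials of positive degrees `dg i`
is `d`-regular (for `d ≥ max dg i`) iff the Hilbert series of `R/⟨f⟩` agrees with
`∏ (1 - z^{dg i}) / (1 - z)^n` modulo `z^d`. -/
theorem stmt2 {K : Type*} [Field K] {n M : ℕ}
    (f : Fin M → MvPolynomial (Fin n) K) (dg : Fin M → ℕ)
    (hhom : ∀ i, (f i).IsHomogeneous (dg i)) (hpos : ∀ i, 0 < dg i)
    (d : ℕ) (hd : ∀ i, dg i ≤ d) :
    IsDRegularSeq f dg d ↔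
      ∀ t : ℕ, t < d →
        (hilbertFn K (Ideal.span (Set.range f)) t : ℤ) =
          PowerSeries.coeff t (semiRegSeries n dg) := by
  constructor
  · intro hreg t ht
    rw [Jk_M f, Tser_M dg]
    exact lemE hhom hpos t (fun i g e hg he => hreg i g e hg (by omega)) M le_rfl
  · intro hser
    have main : ∀ t, t ≤ d → ∀ i : Fin M, ∀ g : MvPolynomial (Fin n) K, ∀ e : ℕ,
        g.IsHomogeneous e → e + dg i < t →
        g * f i ∈ prevIdeal f i → g ∈ prevIdeal f i := by
      intro t
      induction t with
      | zero => exact fun _ i g e _ h => by omega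
      | succ t IH =>
        intro hle i g e hg hlt hmem
        have IH' := IH (by omega)
        by_cases hcase : e + dg i < t
        · exact IH' i g e hg hcase hmem
        · have hte : e + dg i = t := by omega
          have hdgi : dg i ≤ t := by omega
          have hF := lemF hhom hpos t IH' M le_rfl
          have hs := hser t (by omega)
          rw [Jk_M f, Tser_M dg] at hs
          rw [hs] at hF
          have hsum : ∑ j ∈ Finset.univ.filter (fun j : Fin M => (j : ℕ) < M ∧ dg j ≤ t),
              ((Module.finrank K (Wmod (Jk f j.val) (f j) (t - dg j)) : ℤ)
                - (Module.finrank K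
                    (((Jk f j.val).restrictScalars K) ⊓
                      homogeneousSubmodule (Fin n) K (t - dg j) : Submodule K _) : ℤ)) = 0 := by
            linarith
          have hnonneg : ∀ j ∈ Finset.univ.filter (fun j : Fin M => (j : ℕ) < M ∧ dg j ≤ t),
              (0 : ℤ) ≤ ((Module.finrank K (Wmod (Jk f j.val) (f j) (t - dg j)) : ℤ)
                - (Module.finrank K
                    (((Jk f j.val).restrictScalars K) ⊓
                      homogeneousSubmodule (Fin n) K (t - dg j) : Submodule K _) : ℤ)) := by
            intro j _
            have := Submodule.finrank_mono (Jpart_le_W (Jk f j.val) (f j) (t - dg j))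
            omega
          have hzero := (Finset.sum_eq_zero_iff_of_nonneg hnonneg).mp hsum i
            (by simp [Finset.mem_filter, i.isLt, hdgi])
          have hker : Module.finrank K (Wmod (Jk f i.val) (f i) (t - dg i))
              = Module.finrank K
                  (((Jk f i.val).restrictScalars K) ⊓
                    homogeneousSubmodule (Fin n) K (t - dg i) : Submodule K _) := by
            omega
          have hWeq : (((Jk f i.val).restrictScalars K) ⊓
                homogeneousSubmodule (Fin n) K (t - dg i) : Submodule K _)
              = Wmod (Jk f i.val) (f i) (t - dg i) :=
            Submodule.eq_of_le_of_finrank_le (Jpart_le_W _ _ _) (le_of_eq hker)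
          have hgW : g ∈ Wmod (Jk f i.val) (f i) (t - dg i) := by
            refine ⟨?_, ?_⟩
            · have : t - dg i = e := by omega
              rw [this]
              exact hg
            · have hmem' : g * f i ∈ Jk f i.val := by rw [← prev_eq]; exact hmem
              exact hmem'
          rw [← hWeq] at hgW
          rw [prev_eq]
          exact hgW.1
    exact fun i g e hg hlt => main d le_rfl i g e hg hlt
end

section
/- Let H = {h_1,...,h_m} ⊂ R' = K[x_1,...,x_n,y] be homogeneous with R/⟨H^top⟩ Artinian and the sequence (h_1^top,...,h_m^top) cryptographic semi-regular. Then the generalized degree of regularity of ⟨H⟩ satisfies d̃_reg(⟨H⟩) ≥ d_reg(⟨H^top⟩) − 1. -/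
open MvPolynomial

open GBPaper

set_option maxHeartbeats 1000000

namespace Stmt7Aux

variable {K : Type*} [Field K] {n : ℕ}

noncomputable def Phi (K : Type*) [Field K] (n : ℕ) :
    MvPolynomial (Fin (n+1)) K →ₐ[K] MvPolynomial (Fin n) K :=
  aeval (Fin.lastCases 0 fun i => X i)

noncomputable def Iota (K : Type*) [Field K] (n : ℕ) :
    MvPolynomial (Fin n) K →ₐ[K] MvPolynomial (Fin (n+1)) K :=
  aeval (fun i => X i.castSucc)

lemma Phi_X_last : Phi K n (X (Fin.last n)) = 0 := by
  simp [Phi]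

lemma Phi_X_castSucc (i : Fin n) : Phi K n (X i.castSucc) = X i := by
  simp [Phi]

lemma Iota_X (i : Fin n) : Iota K n (X i) = X i.castSucc := by
  simp [Iota]

lemma Phi_Iota (p : MvPolynomial (Fin n) K) : Phi K n (Iota K n p) = p := by
  have h : (Phi K n).comp (Iota K n) = AlgHom.id K _ := by
    apply MvPolynomial.algHom_ext
    intro i
    simp [Phi, Iota]
  calc Phi K n (Iota K n p) = ((Phi K n).comp (Iota K n)) p := rfl
    _ = p := by rw [h]; rfl

lemma ydvd (p : MvPolynomial (Fin (n+1)) K) :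
    (X (Fin.last n) : MvPolynomial (Fin (n+1)) K) ∣ (p - Iota K n (Phi K n p)) := by
  induction p using MvPolynomial.induction_on with
  | C a => simp [Phi, Iota]
  | add p q hp hq =>
      have h : p + q - Iota K n (Phi K n (p + q)) =
          (p - Iota K n (Phi K n p)) + (q - Iota K n (Phi K n q)) := by
        rw [map_add, map_add]; ring
      rw [h]; exact dvd_add hp hq
  | mul_X p i hp =>
      rcases Fin.eq_castSucc_or_eq_last i with ⟨j, rfl⟩ | rfl
      · have h : p * X j.castSucc - Iota K n (Phi K n (p * X j.castSucc)) =
            (p - Iota K n (Phi K n p)) * X j.castSucc := by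
          rw [map_mul, map_mul, Phi_X_castSucc, Iota_X]; ring
        rw [h]; exact Dvd.dvd.mul_right hp _
      · have h : p * X (Fin.last n) - Iota K n (Phi K n (p * X (Fin.last n))) =
            X (Fin.last n) * p := by
          rw [map_mul, Phi_X_last, mul_zero, map_zero]; ring
        rw [h]; exact Dvd.intro p rfl

lemma isHom_Phi {p : MvPolynomial (Fin (n+1)) K} {d : ℕ} (hp : p.IsHomogeneous d) :
    (Phi K n p).IsHomogeneous d := by
  have h : ∀ i : Fin (n+1),
      ((Fin.lastCases 0 fun i => X i : Fin (n+1) → MvPolynomial (Fin n) K) i).IsHomogeneous 1 := by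
    intro i
    induction i using Fin.lastCases with
    | last => simpa using isHomogeneous_zero (Fin n) K 1
    | cast j => simpa using isHomogeneous_X K j
  simpa [one_mul, Phi] using hp.aeval _ h

lemma isHom_Iota {p : MvPolynomial (Fin n) K} {d : ℕ} (hp : p.IsHomogeneous d) :
    (Iota K n p).IsHomogeneous d := by
  simpa [one_mul, Iota] using hp.aeval (fun i : Fin n => (X i.castSucc : MvPolynomial (Fin (n+1)) K))
    (fun i => isHomogeneous_X K _)

lemma homogComp_mul {σ : Type*} {m : ℕ} {q : MvPolynomial σ K} (hq : q.IsHomogeneous m)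
    (p : MvPolynomial σ K) (t : ℕ) :
    homogeneousComponent t (p * q) =
      (if m ≤ t then homogeneousComponent (t - m) p else 0) * q := by
  conv_lhs => rw [← sum_homogeneousComponent p, Finset.sum_mul, map_sum]
  have step : ∀ e : ℕ, homogeneousComponent t (homogeneousComponent e p * q) =
      if t = e + m then homogeneousComponent e p * q else 0 := fun e =>
    homogeneousComponent_of_mem
      ((mem_homogeneousSubmodule _ _).mpr
        ((homogeneousComponent_isHomogeneous e p).mul hq))
  simp_rw [step]
  by_cases hm : m ≤ t
  · rw [if_pos hm]
    rw [Finset.sum_congr rfl (fun e _ => if_congr (show (t = e + m) ↔ (e = t - m) by omega) rfl rfl)]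
    rw [Finset.sum_ite_eq' (Finset.range (p.totalDegree + 1)) (t - m)
      (fun e => homogeneousComponent e p * q)]
    by_cases hr : t - m ∈ Finset.range (p.totalDegree + 1)
    · rw [if_pos hr]
    · rw [if_neg hr]
      have hz : homogeneousComponent (t - m) p = 0 :=
        homogeneousComponent_eq_zero _ p (by simp only [Finset.mem_range] at hr; omega)
      rw [hz, zero_mul]
  · rw [if_neg hm, zero_mul]
    apply Finset.sum_eq_zero
    intro e _
    rw [if_neg (by omega)]

lemma syz {σ : Type*} {M : ℕ} (f : Fin M → MvPolynomial σ K) (dg : Fin M → ℕ)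
    (hf : ∀ i, (f i).IsHomogeneous (dg i)) {D : ℕ}
    (hreg : GBPaper.IsDRegularSeq f dg D) {t : ℕ} (ht : t < D) :
    ∀ k : ℕ, ∀ a : Fin M → MvPolynomial σ K,
      (∀ i, (a i).IsHomogeneous (t - dg i)) → (∀ i, t < dg i → a i = 0) →
      (∀ i : Fin M, k ≤ i.val → a i = 0) → (∑ i, a i * f i = 0) →
      ∃ c : Fin M → Fin M → MvPolynomial σ K,
        ∀ i, a i = ∑ j, (c i j - c j i) * f j := by
  intro k
  induction k with
  | zero =>
      intro a _ _ hvan _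
      exact ⟨0, fun i => by simp [hvan i (Nat.zero_le _)]⟩
  | succ k IH =>
      intro a hahom hadeg hvan hsum
      by_cases hkM : k < M
      case neg =>
        exact IH a hahom hadeg (fun i hi => absurd i.isLt (by omega)) hsum
      case pos =>
      set i₀ : Fin M := ⟨k, hkM⟩ with hi₀
      by_cases ha0 : a i₀ = 0
      · refine IH a hahom hadeg (fun i hi => ?_) hsum
        rcases Nat.lt_or_ge i.val (k+1) with h1 | h1
        · have he : i = i₀ := Fin.ext (by simp only [hi₀]; omega)
          rw [he]; exact ha0
        · exact hvan i h1
      · have hdgi₀ : dg i₀ ≤ t := by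
          by_contra hlt
          exact ha0 (hadeg i₀ (by omega))
        -- a i₀ * f i₀ lies in the ideal of the previous polynomials
        have hmem : a i₀ * f i₀ ∈ GBPaper.prevIdeal f i₀ := by
          have h0 : a i₀ * f i₀ + ∑ i ∈ Finset.univ.erase i₀, a i * f i = 0 := by
            rw [Finset.add_sum_erase _ (fun i => a i * f i) (Finset.mem_univ i₀)]
            exact hsum
          have hexp : a i₀ * f i₀ = ∑ i ∈ Finset.univ.erase i₀, -(a i * f i) := by
            rw [Finset.sum_neg_distrib]
            linear_combination h0
          rw [hexp]
          refine Ideal.sum_mem _ (fun i hi => ?_)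
          rcases lt_or_ge i i₀ with hlt | hge
          · exact neg_mem (Ideal.mul_mem_left _ _
              (Ideal.subset_span ⟨i, hlt, rfl⟩))
          · have hik : (k : ℕ) + 1 ≤ i.val := by
              have hne : i ≠ i₀ := Finset.ne_of_mem_erase hi
              have : i₀ ≤ i := hge
              have h2 : (k : ℕ) ≤ i.val := this
              have h3 : i.val ≠ k := fun hc => hne (Fin.ext (by simp [hi₀, hc]))
              omega
            rw [hvan i hik, zero_mul, neg_zero]
            exact Ideal.zero_mem _
        have hin : a i₀ ∈ GBPaper.prevIdeal f i₀ :=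
          hreg i₀ (a i₀) (t - dg i₀) (hahom i₀) (by omega) hmem
        -- extract coefficients
        classical
        rw [GBPaper.prevIdeal, Set.image_eq_range] at hin
        rw [Ideal.mem_span_range_iff_exists_fun] at hin
        obtain ⟨c', hc'⟩ := hin
        set cExt : Fin M → MvPolynomial σ K :=
          fun j => if hj : j < i₀ then c' ⟨j, hj⟩ else 0 with hcExt
        have sumExt : ∑ j, cExt j * f j = a i₀ := by
          rw [← hc']
          rw [show (∑ j, cExt j * f j)
              = ∑ j, (if j ∈ {j : Fin M | j < i₀} then cExt j * f j else 0) from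
            Finset.sum_congr rfl (fun j _ => by
              by_cases hj : j < i₀
              · rw [if_pos (show j ∈ {j : Fin M | j < i₀} from hj)]
              · rw [if_neg (show ¬ j ∈ {j : Fin M | j < i₀} from hj)]
                simp only [hcExt, dif_neg hj, zero_mul])]
          rw [← Finset.sum_filter]
          rw [Finset.sum_subtype (p := fun j => j ∈ {j : Fin M | j < i₀})
            (Finset.univ.filter (fun j : Fin M => j ∈ {j : Fin M | j < i₀}))
            (fun j => by simp) (fun j => cExt j * f j)]
          refine Finset.sum_congr rfl (fun j _ => ?_)
          have hj : (j : Fin M) < i₀ := j.2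
          simp only [hcExt, dif_pos hj]
        -- homogeneous refinement of the coefficients
        set e₀ : ℕ := t - dg i₀ with he₀
        set cc : Fin M → MvPolynomial σ K :=
          fun j => if dg j ≤ e₀ then homogeneousComponent (e₀ - dg j) (cExt j) else 0 with hcc
        have hccsum : ∑ j, cc j * f j = a i₀ := by
          have h1 := congrArg (homogeneousComponent e₀) sumExt
          rw [map_sum] at h1
          rw [Finset.sum_congr rfl (fun j _ => homogComp_mul (hf j) (cExt j) e₀)] at h1
          rw [homogeneousComponent_of_mem
            ((mem_homogeneousSubmodule _ _).mpr (hahom i₀)), if_pos rfl] at h1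
          exact h1
        have hcc0 : ∀ j, ¬ j < i₀ → cc j = 0 := by
          intro j hj
          simp only [hcc, hcExt, dif_neg hj, map_zero, ite_self]
        have hcci₀ : cc i₀ = 0 := hcc0 i₀ (lt_irrefl i₀)
        have hcchom : ∀ j, (cc j).IsHomogeneous (e₀ - dg j) := by
          intro j
          simp only [hcc]
          split
          · exact homogeneousComponent_isHomogeneous _ _
          · exact isHomogeneous_zero _ _ _
        -- the updated syzygy
        set a' : Fin M → MvPolynomial σ K :=
          fun j => if j = i₀ then 0 else a j + cc j * f i₀ with ha'
        have ha'hom : ∀ j, (a' j).IsHomogeneous (t - dg j) := by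
          intro j
          simp only [ha']
          split
          · exact isHomogeneous_zero _ _ _
          · refine (hahom j).add ?_
            by_cases hj : dg j ≤ e₀
            · have hmul := (hcchom j).mul (hf i₀)
              have harith : (e₀ - dg j) + dg i₀ = t - dg j := by omega
              rwa [harith] at hmul
            · simp only [hcc, if_neg hj, zero_mul]
              exact isHomogeneous_zero _ _ _
        have ha'deg : ∀ j, t < dg j → a' j = 0 := by
          intro j hj
          simp only [ha']
          split
          · rfl
          · simp only [hcc, if_neg (show ¬ dg j ≤ e₀ by omega), zero_mul, add_zero]
            exact hadeg j hj
        have ha'van : ∀ j : Fin M, k ≤ j.val → a' j = 0 := by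
          intro j hj
          simp only [ha']
          split
          · rfl
          · rename_i hne
            have hjk : (k : ℕ) + 1 ≤ j.val := by
              have h3 : j.val ≠ k := fun hc => hne (Fin.ext (by simp [hi₀, hc]))
              omega
            have hnlt : ¬ j < i₀ := by
              intro hc
              have hc2 : j.val < k := hc
              omega
            rw [hvan j hjk, hcc0 j hnlt, zero_mul, zero_add]
        have ha'sum : ∑ j, a' j * f j = 0 := by
          have hterm : ∀ j, a' j * f j = (a j * f j + (cc j * f j) * f i₀)
              - (if j = i₀ then a i₀ * f i₀ else 0) := by
            intro j
            by_cases hj : j = i₀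
            · subst hj
              rw [show a' i₀ = 0 from by simp [ha'], if_pos rfl, hcci₀]
              ring
            · simp only [ha', if_neg hj]
              ring
          calc ∑ j, a' j * f j
              = ∑ j, ((a j * f j + (cc j * f j) * f i₀)
                  - (if j = i₀ then a i₀ * f i₀ else 0)) :=
                Finset.sum_congr rfl (fun j _ => hterm j)
            _ = (∑ j, a j * f j + (∑ j, cc j * f j) * f i₀) - a i₀ * f i₀ := by
                rw [Finset.sum_sub_distrib, Finset.sum_add_distrib, ← Finset.sum_mul]
                congr 1
                simp
            _ = 0 := by rw [hsum, hccsum]; ring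
        obtain ⟨c'', hc''⟩ := IH a' ha'hom ha'deg ha'van ha'sum
        refine ⟨fun j l => c'' j l + (if j = i₀ then cc l else 0), fun i => ?_⟩
        have expand : ∀ j : Fin M, (c'' i j + (if i = i₀ then cc j else 0)
              - (c'' j i + (if j = i₀ then cc i else 0))) * f j
            = (c'' i j - c'' j i) * f j
              + ((if i = i₀ then cc j else 0) * f j
                - (if j = i₀ then cc i * f j else 0)) := by
          intro j
          split_ifs <;> ring
        rw [Finset.sum_congr rfl (fun j _ => expand j)]
        rw [Finset.sum_add_distrib, ← hc'' i, Finset.sum_sub_distrib]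
        rw [show (∑ j, if j = i₀ then cc i * f j else 0) = cc i * f i₀ by simp]
        by_cases h1 : i = i₀
        · have h2 : a' i = 0 := by simp only [ha', if_pos h1]
          have h3 : ∑ j, (if i = i₀ then cc j else 0) * f j = a i₀ := by
            rw [Finset.sum_congr rfl (fun j _ => by rw [if_pos h1])]
            exact hccsum
          rw [h2, h3, h1, hcci₀, zero_mul]
          ring
        · have h2 : a' i = a i + cc i * f i₀ := by simp only [ha', if_neg h1]
          have h3 : ∑ j, (if i = i₀ then cc j else 0) * f j = 0 :=
            Finset.sum_eq_zero (fun j _ => by rw [if_neg h1, zero_mul])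
          rw [h2, h3]
          ring


lemma mulY_isHom {K : Type*} [Field K] {n : ℕ} {p : MvPolynomial (Fin (n+1)) K} {d : ℕ}
    (hp : p.IsHomogeneous d) :
    ((X (Fin.last n) : MvPolynomial (Fin (n+1)) K) * p).IsHomogeneous (d + 1) := by
  have h2 := hp.mul (isHomogeneous_X K (Fin.last n))
  rwa [mul_comm] at h2


lemma topPartR_eq {K : Type*} [Field K] {n : ℕ} (g : MvPolynomial (Fin (n+1)) K) :
    GBPaper.topPartR g = Phi K n g := rfl

lemma yNZD {K : Type*} [Field K] {n M : ℕ}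
    (h : Fin M → MvPolynomial (Fin (n + 1)) K) (dg : Fin M → ℕ)
    (hhom : ∀ i, (h i).IsHomogeneous (dg i)) {D : ℕ}
    (hcsr : GBPaper.IsDRegularSeq (fun i => Phi K n (h i)) dg D)
    {d : ℕ} (hd : d + 1 < D)
    {p : MvPolynomial (Fin (n + 1)) K} (hp : p.IsHomogeneous d)
    (hyp : X (Fin.last n) * p ∈ Ideal.span (Set.range h)) :
    p ∈ Ideal.span (Set.range h) := by
  classical
  set f : Fin M → MvPolynomial (Fin n) K := fun i => Phi K n (h i) with hfdef
  have hf : ∀ i, (f i).IsHomogeneous (dg i) := fun i => isHom_Phi (hhom i)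
  obtain ⟨p', hp'⟩ := Ideal.mem_span_range_iff_exists_fun.mp hyp
  set t : ℕ := d + 1 with htdef
  have hyphom : (X (Fin.last n) * p).IsHomogeneous t := mulY_isHom hp
  set a : Fin M → MvPolynomial (Fin (n+1)) K :=
    fun i => if dg i ≤ t then homogeneousComponent (t - dg i) (p' i) else 0 with ha
  have hsum : ∑ i, a i * h i = X (Fin.last n) * p := by
    have h1 := congrArg (homogeneousComponent t) hp'
    rw [map_sum] at h1
    rw [Finset.sum_congr rfl (fun i _ => homogComp_mul (hhom i) (p' i) t)] at h1
    rwa [homogeneousComponent_of_mem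
      ((mem_homogeneousSubmodule _ _).mpr hyphom), if_pos rfl] at h1
  have hahom : ∀ i, (a i).IsHomogeneous (t - dg i) := by
    intro i
    simp only [ha]
    split
    · exact homogeneousComponent_isHomogeneous _ _
    · exact isHomogeneous_zero _ _ _
  set ab : Fin M → MvPolynomial (Fin n) K := fun i => Phi K n (a i) with hab
  have habhom : ∀ i, (ab i).IsHomogeneous (t - dg i) := fun i => isHom_Phi (hahom i)
  have habdeg : ∀ i, t < dg i → ab i = 0 := by
    intro i hi
    have h0 : a i = 0 := by simp only [ha, if_neg (show ¬ dg i ≤ t by omega)]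
    simp only [hab, h0, map_zero]
  have hsyzsum : ∑ i, ab i * f i = 0 := by
    have h1 := congrArg (Phi K n) hsum
    rw [map_sum] at h1
    simp only [map_mul] at h1
    rw [Phi_X_last] at h1
    rw [zero_mul] at h1
    exact h1
  obtain ⟨c, hc⟩ := syz f dg hf hcsr (show t < D by omega) M ab habhom habdeg
    (fun i hi => absurd i.isLt (by omega)) hsyzsum
  choose r hr using fun i => ydvd (K := K) (n := n) (h i)
  choose b hb using fun i => ydvd (K := K) (n := n) (a i)
  -- hr i : h i - Iota (Phi (h i)) = y * r i
  have hv : ∀ j, Iota K n (f j) = h j - X (Fin.last n) * r j := fun j => by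
    have := hr j
    simp only [hfdef]
    linear_combination -this
  set Q : MvPolynomial (Fin (n+1)) K :=
    ∑ i, ∑ j, Iota K n (c i j) * (r i * h j - r j * h i) with hQ
  have key : ∑ i, Iota K n (ab i) * h i = X (Fin.last n) * Q := by
    have step1 : ∑ i, Iota K n (ab i) * h i
        = ∑ i, ∑ j, ((Iota K n (c i j) * (Iota K n (f j) * h i))
            - (Iota K n (c j i) * (Iota K n (f j) * h i))) := by
      refine Finset.sum_congr rfl (fun i _ => ?_)
      rw [hc i, map_sum, Finset.sum_mul]
      refine Finset.sum_congr rfl (fun j _ => ?_)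
      rw [map_mul, map_sub]
      ring
    have step2 : ∑ i, ∑ j, (Iota K n (c j i) * (Iota K n (f j) * h i))
        = ∑ i, ∑ j, (Iota K n (c i j) * (Iota K n (f i) * h j)) :=
      Finset.sum_comm
    calc ∑ i, Iota K n (ab i) * h i
        = ∑ i, ∑ j, ((Iota K n (c i j) * (Iota K n (f j) * h i))
            - (Iota K n (c j i) * (Iota K n (f j) * h i))) := step1
      _ = ∑ i, ∑ j, (Iota K n (c i j) * (Iota K n (f j) * h i))
          - ∑ i, ∑ j, (Iota K n (c j i) * (Iota K n (f j) * h i)) := by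
            simp only [Finset.sum_sub_distrib]
      _ = ∑ i, ∑ j, (Iota K n (c i j) * (Iota K n (f j) * h i))
          - ∑ i, ∑ j, (Iota K n (c i j) * (Iota K n (f i) * h j)) := by rw [step2]
      _ = ∑ i, ∑ j, ((Iota K n (c i j) * (Iota K n (f j) * h i))
            - (Iota K n (c i j) * (Iota K n (f i) * h j))) := by
            simp only [Finset.sum_sub_distrib]
      _ = ∑ i, ∑ j, X (Fin.last n) * (Iota K n (c i j) * (r i * h j - r j * h i)) := by
            refine Finset.sum_congr rfl (fun i _ => Finset.sum_congr rfl (fun j _ => ?_))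
            rw [hv i, hv j]
            ring
      _ = X (Fin.last n) * Q := by
            rw [hQ, Finset.mul_sum]
            exact Finset.sum_congr rfl (fun i _ => by rw [Finset.mul_sum])
  have hbe : ∀ i, a i = Iota K n (ab i) + X (Fin.last n) * b i := by
    intro i
    have := hb i
    simp only [hab]
    linear_combination this
  have hmain : X (Fin.last n) * p = X (Fin.last n) * (Q + ∑ i, b i * h i) := by
    calc X (Fin.last n) * p = ∑ i, a i * h i := hsum.symm
      _ = ∑ i, (Iota K n (ab i) + X (Fin.last n) * b i) * h i :=
          Finset.sum_congr rfl (fun i _ => by rw [hbe i])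
      _ = ∑ i, Iota K n (ab i) * h i + X (Fin.last n) * ∑ i, b i * h i := by
          rw [Finset.mul_sum, ← Finset.sum_add_distrib]
          exact Finset.sum_congr rfl (fun i _ => by ring)
      _ = X (Fin.last n) * (Q + ∑ i, b i * h i) := by rw [key]; ring
  have hcancel : p = Q + ∑ i, b i * h i :=
    mul_left_cancel₀ (MvPolynomial.X_ne_zero (Fin.last n)) hmain
  have hhmem : ∀ j, h j ∈ Ideal.span (Set.range h) :=
    fun j => Ideal.subset_span ⟨j, rfl⟩
  rw [hcancel]
  refine Ideal.add_mem _ ?_ (Ideal.sum_mem _ (fun i _ =>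
    Ideal.mul_mem_left _ _ (hhmem i)))
  refine Ideal.sum_mem _ (fun i _ => Ideal.sum_mem _ (fun j _ =>
    Ideal.mul_mem_left _ _ (Ideal.sub_mem _
      (Ideal.mul_mem_left _ _ (hhmem j)) (Ideal.mul_mem_left _ _ (hhmem i)))))

end Stmt7Aux

/-- if `R/⟨H^top⟩` is Artinian and the sequence of top parts is
cryptographic semi-regular, then the generalized degree of regularity of `⟨H⟩`
is at least `d_reg(⟨H^top⟩) - 1` (stated as: any degree from which the Hilbert
function of `R'/⟨H⟩` is constant is at least `d_reg(⟨H^top⟩) - 1`). -/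
theorem stmt7 {K : Type*} [Field K] {n M : ℕ}
    (h : Fin M → MvPolynomial (Fin (n + 1)) K) (dg : Fin M → ℕ)
    (hhom : ∀ i, (h i).IsHomogeneous (dg i)) (hpos : ∀ i, 0 < dg i)
    (hArt : ∃ d : ℕ, ∀ g : MvPolynomial (Fin n) K, g.IsHomogeneous d →
      g ∈ Ideal.span (Set.range fun i => topPartR (h i)))
    (hcsr : IsDRegularSeq (fun i => topPartR (h i)) dg
      (degReg K (Ideal.span (Set.range fun i => topPartR (h i))))) :
    ∀ d₀ : ℕ, (∀ d : ℕ, d₀ ≤ d →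
        hilbertFn K (Ideal.span (Set.range h)) d =
          hilbertFn K (Ideal.span (Set.range h)) d₀) →
      degReg K (Ideal.span (Set.range fun i => topPartR (h i))) - 1 ≤ d₀ := by
  classical
  intro d₀ hconst
  open Stmt7Aux in
  by_cases hD : degReg K (Ideal.span (Set.range fun i => topPartR (h i))) ≤ d₀ + 1
  · omega
  push_neg at hD
  exfalso
  set J : Ideal (MvPolynomial (Fin n) K) :=
    Ideal.span (Set.range fun i => topPartR (h i)) with hJ
  set I : Ideal (MvPolynomial (Fin (n+1)) K) := Ideal.span (Set.range h) with hI
  set V : ℕ → Submodule K (MvPolynomial (Fin (n+1)) K ⧸ I) :=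
    fun d => (MvPolynomial.homogeneousSubmodule (Fin (n+1)) K d).map
      (Ideal.Quotient.mkₐ K I).toLinearMap with hV
  have finV : ∀ d, FiniteDimensional K (V d) := by
    intro d
    haveI h1 : FiniteDimensional K (homogeneousSubmodule (Fin (n+1)) K d) :=
      Submodule.finiteDimensional_of_le (S₂ := restrictTotalDegree (Fin (n+1)) K d)
        (fun p hp => (mem_restrictTotalDegree _ _ _).mpr
          (((mem_homogeneousSubmodule _ _).mp hp).totalDegree_le))
    exact Module.Finite.of_surjective
      ((Ideal.Quotient.mkₐ K I).toLinearMap.restrict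
        (p := homogeneousSubmodule (Fin (n+1)) K d) (q := V d)
        (fun x hx => Submodule.mem_map_of_mem hx))
      (fun z => by
        obtain ⟨w, hw⟩ := z
        obtain ⟨p, hp, rfl⟩ := hw
        exact ⟨⟨p, hp⟩, rfl⟩)
  haveI := finV d₀
  haveI := finV (d₀ + 1)
  -- multiplication by y as a linear map V d₀ → V (d₀ + 1)
  have hmaps : ∀ x ∈ V d₀,
      (LinearMap.mulLeft K ((Ideal.Quotient.mkₐ K I) (X (Fin.last n)))) x ∈ V (d₀ + 1) := by
    intro x hx
    obtain ⟨p, hp, rfl⟩ := hx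
    refine ⟨X (Fin.last n) * p, ?_, ?_⟩
    · exact (mem_homogeneousSubmodule _ _).mpr
        (mulY_isHom ((mem_homogeneousSubmodule _ _).mp hp))
    · simp only [LinearMap.mulLeft_apply, AlgHom.toLinearMap_apply, ← map_mul]
  set L : V d₀ →ₗ[K] V (d₀ + 1) :=
    (LinearMap.mulLeft K ((Ideal.Quotient.mkₐ K I) (X (Fin.last n)))).restrict hmaps with hL
  have hinj : Function.Injective L := by
    intro x₁ x₂ hx
    obtain ⟨x, hxm⟩ := x₁
    obtain ⟨x', hxm'⟩ := x₂
    obtain ⟨p, hp, rfl⟩ := hxm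
    obtain ⟨p', hp', rfl⟩ := hxm'
    have hval : (Ideal.Quotient.mkₐ K I) (X (Fin.last n) * p)
        = (Ideal.Quotient.mkₐ K I) (X (Fin.last n) * p') := by
      have h2 := congrArg Subtype.val hx
      rw [hL, LinearMap.restrict_apply, LinearMap.restrict_apply] at h2
      simp only [LinearMap.mulLeft_apply, AlgHom.toLinearMap_apply] at h2
      rw [map_mul, map_mul]
      exact h2
    have hmem : X (Fin.last n) * p - X (Fin.last n) * p' ∈ I := by
      refine Ideal.Quotient.eq.mp ?_
      rwa [Ideal.Quotient.mkₐ_eq_mk] at hval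
    have hmem2 : X (Fin.last n) * (p - p') ∈ I := by
      rw [mul_sub]; exact hmem
    have hsub : (p - p').IsHomogeneous d₀ :=
      ((mem_homogeneousSubmodule _ _).mp hp).sub ((mem_homogeneousSubmodule _ _).mp hp')
    have hfin : p - p' ∈ I := yNZD h dg hhom (fun i g e hg he hgm => hcsr i g e hg he hgm)
      hD hsub hmem2
    apply Subtype.ext
    have h4 : (Ideal.Quotient.mkₐ K I) (p - p') = 0 := by
      rw [Ideal.Quotient.mkₐ_eq_mk, Ideal.Quotient.eq_zero_iff_mem]
      exact hfin
    rw [map_sub] at h4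
    exact sub_eq_zero.mp h4
  have hfr : Module.finrank K (V d₀) = Module.finrank K (V (d₀ + 1)) :=
    (hconst (d₀ + 1) (by omega)).symm
  have hsurj : Function.Surjective L :=
    (LinearMap.injective_iff_surjective_of_finrank_eq_finrank hfr).mp hinj
  -- now derive that all homogeneous polys of degree d₀+1 lie in J
  have hstep : ∀ g : MvPolynomial (Fin n) K, g.IsHomogeneous (d₀ + 1) → g ∈ J := by
    intro g hg
    have hgmem : (Ideal.Quotient.mkₐ K I) (Iota K n g) ∈ V (d₀ + 1) :=
      ⟨Iota K n g, (mem_homogeneousSubmodule _ _).mpr (isHom_Iota hg), rfl⟩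
    obtain ⟨⟨x, hxm⟩, hLx⟩ := hsurj ⟨_, hgmem⟩
    obtain ⟨p, hp, rfl⟩ := hxm
    have hval : (Ideal.Quotient.mkₐ K I) (X (Fin.last n) * p)
        = (Ideal.Quotient.mkₐ K I) (Iota K n g) := by
      have h2 := congrArg Subtype.val hLx
      rw [hL, LinearMap.restrict_apply] at h2
      simp only [LinearMap.mulLeft_apply, AlgHom.toLinearMap_apply] at h2
      rw [map_mul]
      exact h2
    have hmem : Iota K n g - X (Fin.last n) * p ∈ I := by
      refine Ideal.Quotient.eq.mp ?_
      have hval2 := hval.symm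
      rwa [Ideal.Quotient.mkₐ_eq_mk] at hval2
    have hgeq : g = Phi K n (Iota K n g - X (Fin.last n) * p) := by
      rw [map_sub, Phi_Iota, map_mul, Phi_X_last, zero_mul, sub_zero]
    rw [hgeq]
    -- Phi maps I into J
    have hPhiI : Phi K n (Iota K n g - X (Fin.last n) * p) ∈ Ideal.map (Phi K n : MvPolynomial (Fin (n+1)) K →+* MvPolynomial (Fin n) K) I :=
      Ideal.mem_map_of_mem _ hmem
    have hmap : Ideal.map (Phi K n : MvPolynomial (Fin (n+1)) K →+* MvPolynomial (Fin n) K) I = J := by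
      rw [hI, hJ, Ideal.map_span]
      congr 1
      rw [← Set.range_comp]
      rfl
    rwa [hmap] at hPhiI
  have : degReg K J ≤ d₀ + 1 := Nat.sInf_le hstep
  omega
end
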